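/- arXiv:2508.05930 — 8 statements merged into one kernel-verified Lean document; each statement's English description precedes it below -/
import Mathlib

section
/- If λ > 0 and u is a positive solution of the radial problem (r^{N−1} φ(u′(r)))′ = −λ r^{N−1} f(u(r)) on (0,1), u′(0) = 0, u(1) = 0, then u(0) ≥ U₀. -/
open Set Filter MeasureTheory

/-- `u` (with derivative `u'`) is a positive solution of the radial problem
`(r^(N-1) φ(u'(r)))' = -λ r^(N-1) f(u(r))` on `(0,1)`, with `u'(0) = 0`, `u(1) = 0`,
`u ∈ C¹([0,1])`, `φ ∘ u' ∈ C¹((0,1))`, and `u > 0` on `[0,1)`. -/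
structure IsPosSol (N : ℕ) (φ f : ℝ → ℝ) (lam : ℝ) (u u' : ℝ → ℝ) : Prop where
  hasDeriv : ∀ r ∈ Set.Icc (0:ℝ) 1, HasDerivAt u (u' r) r
  contDeriv : ContinuousOn u' (Set.Icc 0 1)
  pos : ∀ r ∈ Set.Ico (0:ℝ) 1, 0 < u r
  phiC1 : ∃ w : ℝ → ℝ, ContinuousOn w (Set.Ioo 0 1) ∧
    ∀ r ∈ Set.Ioo (0:ℝ) 1, HasDerivAt (fun s => φ (u' s)) (w r) r
  eqn : ∀ r ∈ Set.Ioo (0:ℝ) 1,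
    HasDerivAt (fun s => s ^ (N - 1) * φ (u' s)) (-(lam * r ^ (N - 1) * f (u r))) r
  deriv_zero : u' 0 = 0
  bd : u 1 = 0

theorem value_at_zero_ge_U0    (N : ℕ) (hN : 1 < N)
    (ϕ φ : ℝ → ℝ)
    (hϕc : Continuous ϕ) (hϕnn : ∀ s, 0 ≤ ϕ s) (hϕeven : ∀ s, ϕ (-s) = ϕ s)
    (hϕdiff : ∀ s : ℝ, s ≠ 0 → DifferentiableAt ℝ ϕ s)
    (hϕmono : StrictMonoOn ϕ (Set.Ioi 0))
    (hφ : ∀ s, φ s = ϕ s * s)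
    (p c1 c2 : ℝ) (hp : 1 < p) (hc1 : 0 < c1) (hc2 : 0 < c2)
    (hgrow : ∀ r : ℝ, 0 ≤ r → c2 * r ^ (p - 1) ≤ φ r ∧ φ r ≤ c1 * r ^ (p - 1))
    (f : ℝ → ℝ) (hfc : ContinuousOn f (Set.Ici 0)) (hfm : MonotoneOn f (Set.Ici 0))
    (hf0 : f 0 < 0) (u0 : ℝ) (hu0 : 0 < u0) (hfu0 : f u0 = 0)
    (hzero : ∀ s : ℝ, 0 ≤ s → f s = 0 → s = u0)
    (F : ℝ → ℝ) (hF : ∀ t, F t = ∫ s in (0:ℝ)..t, f s)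
    (U0 : ℝ) (hU0 : 0 < U0) (hFU0 : F U0 = 0)
    (hU0uniq : ∀ s : ℝ, 0 < s → F s = 0 → s = U0)
    (hu0U0 : u0 < U0)
    (lam : ℝ) (hlam : 0 < lam) (u u' : ℝ → ℝ) (hu : IsPosSol N φ f lam u u') :
    U0 ≤ u 0 := by
  obtain ⟨w, hwcont, hw⟩ := hu.phiC1
  -- basic facts about φ
  have hφ0 : φ 0 = 0 := by rw [hφ]; ring
  have hodd : ∀ s, φ (-s) = -φ s := fun s => by rw [hφ, hφ, hϕeven]; ring
  have hφpos : ∀ s : ℝ, 0 < s → 0 < φ s := by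
    intro s hs
    have h := (hgrow s hs.le).1
    have h2 : 0 < c2 * s ^ (p - 1) := mul_pos hc2 (Real.rpow_pos_of_pos hs _)
    linarith
  have hϕpos : ∀ s : ℝ, 0 < s → 0 < ϕ s := by
    intro s hs
    have h := hφpos s hs
    rw [hφ] at h
    by_contra hc
    push_neg at hc
    nlinarith
  have hmono : StrictMono φ := by
    have key : ∀ a b : ℝ, 0 ≤ a → a < b → φ a < φ b := by
      intro a b ha hab
      have hb : 0 < b := lt_of_le_of_lt ha hab
      rcases eq_or_lt_of_le ha with h | h
      · rw [← h, hφ0]; exact hφpos b hb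
      · rw [hφ a, hφ b]
        have h1 : ϕ a < ϕ b := hϕmono (Set.mem_Ioi.mpr h) (Set.mem_Ioi.mpr hb) hab
        nlinarith [hϕpos a h]
    intro a b hab
    rcases le_or_gt 0 a with ha | ha
    · exact key a b ha hab
    rcases le_or_gt b 0 with hb | hb
    · have h := key (-b) (-a) (by linarith) (by linarith)
      rw [hodd, hodd] at h; linarith
    · have h1 := hφpos (-a) (by linarith)
      rw [hodd] at h1
      have h2 := hφpos b hb
      linarith
  have hφc : Continuous φ := by
    have h : φ = fun s => ϕ s * s := funext hφ
    rw [h]; exact hϕc.mul continuous_id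
  have htop : Tendsto φ atTop atTop := by
    apply tendsto_atTop_mono' atTop _
      ((tendsto_rpow_atTop (by linarith : (0:ℝ) < p - 1)).const_mul_atTop hc2)
    filter_upwards [eventually_ge_atTop (0:ℝ)] with r hr
    exact (hgrow r hr).1
  have hbot : Tendsto φ atBot atBot := by
    have h1 : Tendsto (fun x => φ (-x)) atBot atTop := htop.comp tendsto_neg_atBot_atTop
    have h2 : Tendsto (fun x => -φ (-x)) atBot atBot := tendsto_neg_atTop_atBot.comp h1
    refine h2.congr fun x => ?_
    rw [hodd]; ring
  have hsurj : Function.Surjective φ := hφc.surjective htop hbot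
  -- the inverse ψ of φ
  set ψ : ℝ → ℝ := ⇑(StrictMono.orderIsoOfSurjective φ hmono hsurj).symm with hψdef
  have hψφ : ∀ s, ψ (φ s) = s := by
    intro s
    have h : φ s = (StrictMono.orderIsoOfSurjective φ hmono hsurj) s := by
      rw [StrictMono.coe_orderIsoOfSurjective]
    rw [hψdef, h, OrderIso.symm_apply_apply]
  have hψc : Continuous ψ := OrderIso.continuous _
  have hψ0 : ψ 0 = 0 := by have h := hψφ 0; rwa [hφ0] at h
  have hψmono : Monotone ψ := (StrictMono.orderIsoOfSurjective φ hmono hsurj).symm.monotone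
  have hψnn : ∀ t : ℝ, 0 ≤ t → 0 ≤ ψ t := fun t ht => hψ0 ▸ hψmono ht
  have hψnp : ∀ t : ℝ, t ≤ 0 → ψ t ≤ 0 := fun t ht => hψ0 ▸ hψmono ht
  -- the primitive Φs of ψ
  set Φs : ℝ → ℝ := fun t => ∫ s in (0:ℝ)..t, ψ s with hΦsdef
  have hΦd : ∀ t, HasDerivAt Φs (ψ t) t := fun t =>
    intervalIntegral.integral_hasDerivAt_right (hψc.intervalIntegrable _ _)
      (hψc.stronglyMeasurableAtFilter _ _) hψc.continuousAt
  have hΦc : Continuous Φs :=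
    continuous_iff_continuousAt.mpr fun t => (hΦd t).differentiableAt.continuousAt
  have hΦ0 : Φs 0 = 0 := by rw [hΦsdef]; simp
  have hΦnn : ∀ t, 0 ≤ Φs t := by
    intro t
    rcases le_or_gt 0 t with ht | ht
    · exact intervalIntegral.integral_nonneg ht fun x hx => hψnn x hx.1
    · rw [hΦsdef]
      simp only
      rw [intervalIntegral.integral_symm]
      have h : ∫ s in t..(0:ℝ), ψ s ≤ ∫ _ in t..(0:ℝ), (0:ℝ) :=
        intervalIntegral.integral_mono_on ht.le (hψc.intervalIntegrable _ _)
          intervalIntegrable_const fun x hx => hψnp x hx.2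
      simp only [intervalIntegral.integral_const, smul_zero] at h
      linarith
  -- the continuous extension g of f and its primitive G
  set g : ℝ → ℝ := fun s => f (max s 0) with hgdef
  have hgc : Continuous g :=
    hfc.comp_continuous (continuous_id.max continuous_const) fun x => Set.mem_Ici.mpr (le_max_right _ _)
  have hgf : ∀ s : ℝ, 0 ≤ s → g s = f s := by
    intro s hs; rw [hgdef]; simp only [max_eq_left hs]
  have hgm : Monotone g := fun a b hab =>
    hfm (Set.mem_Ici.mpr (le_max_right _ _)) (Set.mem_Ici.mpr (le_max_right _ _)) (max_le_max hab le_rfl)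
  have hgu0 : g u0 = 0 := by rw [hgf u0 hu0.le, hfu0]
  have hgle : ∀ s, s ≤ u0 → g s ≤ 0 := fun s hs => hgu0 ▸ hgm hs
  have hgge : ∀ s, u0 ≤ s → 0 ≤ g s := fun s hs => hgu0 ▸ hgm hs
  set G : ℝ → ℝ := fun t => ∫ s in (0:ℝ)..t, g s with hGdef
  have hGd : ∀ t, HasDerivAt G (g t) t := fun t =>
    intervalIntegral.integral_hasDerivAt_right (hgc.intervalIntegrable _ _)
      (hgc.stronglyMeasurableAtFilter _ _) hgc.continuousAt
  have hGc : Continuous G :=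
    continuous_iff_continuousAt.mpr fun t => (hGd t).differentiableAt.continuousAt
  have hFG : ∀ t : ℝ, 0 ≤ t → F t = G t := by
    intro t ht
    rw [hF, hGdef]
    refine intervalIntegral.integral_congr fun x hx => ?_
    rw [Set.uIcc_of_le ht] at hx
    exact (hgf x hx.1).symm
  have hGU0 : G U0 = 0 := by rw [← hFG U0 hU0.le]; exact hFU0
  have hGsign : ∀ s : ℝ, 0 < s → s ≤ U0 → G s ≤ 0 := by
    intro s hs hsU
    rcases le_or_gt s u0 with h | h
    · have h2 : ∫ x in (0:ℝ)..s, g x ≤ ∫ _ in (0:ℝ)..s, (0:ℝ) :=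
        intervalIntegral.integral_mono_on hs.le (hgc.intervalIntegrable _ _)
          intervalIntegrable_const fun x hx => hgle x (le_trans hx.2 h)
      simp only [intervalIntegral.integral_const, smul_zero] at h2
      rw [hGdef]; exact h2
    · have hadd := intervalIntegral.integral_add_adjacent_intervals
        (a := 0) (b := s) (c := U0) (μ := volume)
        (hgc.intervalIntegrable _ _) (hgc.intervalIntegrable _ _)
      have hnn : 0 ≤ ∫ x in s..U0, g x :=
        intervalIntegral.integral_nonneg hsU fun x hx => hgge x (le_trans h.le hx.1)
      have h2 : G s + ∫ x in s..U0, g x = G U0 := hadd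
      linarith [hGU0]
  -- nonnegativity of u
  have hupos : ∀ r ∈ Set.Icc (0:ℝ) 1, 0 ≤ u r := by
    intro r hr
    rcases eq_or_lt_of_le hr.2 with h | h
    · rw [h, hu.bd]
    · exact (hu.pos r ⟨hr.1, h⟩).le
  -- the energy
  set E : ℝ → ℝ := fun r => lam * G (u r) + Φs (φ (u' r)) with hEdef
  have hEd : ∀ r ∈ Set.Ioo (0:ℝ) 1, HasDerivAt E (u' r * (lam * g (u r) + w r)) r := by
    intro r hr
    have hr01 : r ∈ Set.Icc (0:ℝ) 1 := ⟨hr.1.le, hr.2.le⟩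
    have h1 : HasDerivAt (fun x => G (u x)) (g (u r) * u' r) r :=
      (hGd (u r)).comp r (hu.hasDeriv r hr01)
    have h2 : HasDerivAt (fun x => Φs (φ (u' x))) (ψ (φ (u' r)) * w r) r :=
      (hΦd _).comp r (hw r hr)
    rw [hψφ] at h2
    have h3 := (h1.const_mul lam).add h2
    rw [hEdef]
    exact h3.congr_deriv (by ring)
  have hkey : ∀ r ∈ Set.Ioo (0:ℝ) 1,
      ((N - 1 : ℕ) : ℝ) * r ^ (N - 1 - 1) * φ (u' r) + r ^ (N - 1) * w r
        = -(lam * r ^ (N - 1) * g (u r)) := by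
    intro r hr
    have hprod : HasDerivAt (fun x : ℝ => x ^ (N - 1) * φ (u' x))
        (((N - 1 : ℕ) : ℝ) * r ^ (N - 1 - 1) * φ (u' r) + r ^ (N - 1) * w r) r := by
      exact (hasDerivAt_pow (N - 1) r).mul (hw r hr)
    have h1 := hprod.unique (hu.eqn r hr)
    rw [hgf (u r) (hupos r ⟨hr.1.le, hr.2.le⟩)]
    exact h1
  have hEanti : AntitoneOn E (Set.Icc 0 1) := by
    apply antitoneOn_of_deriv_nonpos (convex_Icc 0 1)
    · have hucont : ContinuousOn u (Set.Icc 0 1) := fun r hr =>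
        ((hu.hasDeriv r hr).continuousAt).continuousWithinAt
      exact (continuousOn_const.mul (hGc.comp_continuousOn hucont)).add
        ((hΦc.comp hφc).comp_continuousOn hu.contDeriv)
    · rw [interior_Icc]
      intro x hx
      exact ((hEd x hx).differentiableAt).differentiableWithinAt
    · rw [interior_Icc]
      intro x hx
      rw [(hEd x hx).deriv]
      have hk := hkey x hx
      have hxpow : (0:ℝ) < x ^ (N - 1) := pow_pos hx.1 _
      have hsign : 0 ≤ u' x * φ (u' x) := by
        rw [hφ]
        have h : u' x * (ϕ (u' x) * u' x) = ϕ (u' x) * (u' x) ^ 2 := by ring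
        rw [h]
        exact mul_nonneg (hϕnn _) (sq_nonneg _)
      have hN2 : (0:ℝ) ≤ ((N - 1 : ℕ) : ℝ) * x ^ (N - 1 - 1) :=
        mul_nonneg (Nat.cast_nonneg _) (pow_nonneg hx.1.le _)
      have h5 : x ^ (N - 1) * (u' x * (lam * g (u x) + w x))
          = -(((N - 1 : ℕ) : ℝ) * x ^ (N - 1 - 1) * (u' x * φ (u' x))) := by
        linear_combination u' x * hk
      by_contra hpos
      push_neg at hpos
      nlinarith [mul_pos hxpow hpos, mul_nonneg hN2 hsign]
  have hE10 : E 1 ≤ E 0 :=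
    hEanti (Set.left_mem_Icc.mpr zero_le_one) (Set.right_mem_Icc.mpr zero_le_one) zero_le_one
  have hE0 : E 0 = lam * G (u 0) := by
    rw [hEdef]
    simp only
    rw [hu.deriv_zero, hφ0, hΦ0, add_zero]
  have hE1 : 0 ≤ E 1 := by
    rw [hEdef]
    simp only
    have hG1 : G (u 1) = 0 := by rw [hu.bd, hGdef]; simp
    rw [hG1, mul_zero, zero_add]
    exact hΦnn _
  have hGu0 : 0 ≤ G (u 0) := by
    have h := le_trans hE1 hE10
    rw [hE0] at h
    exact le_of_mul_le_mul_left (by simpa using h) hlam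
  have hu0pos : 0 < u 0 := hu.pos 0 ⟨le_rfl, one_pos⟩
  by_contra hlt
  push_neg at hlt
  have h1 : G (u 0) ≤ 0 := hGsign (u 0) hu0pos hlt.le
  have h2 : F (u 0) = 0 := by rw [hFG (u 0) hu0pos.le]; linarith
  exact (ne_of_lt hlt) (hU0uniq (u 0) hu0pos h2)
end

section
/- There exists λ₁ > 0 such that for every λ > λ₁ and every positive solution u of the radial problem (r^{N−1} φ(u′(r)))′ = −λ r^{N−1} f(u(r)) on (0,1), u′(0) = 0, u(1) = 0, there exists r₁ ∈ (0, 1/2] with u(r₁) = (u₀ + U₀)/2. -/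
open Set Filter MeasureTheory

section Helpers
variable {g g' : ℝ → ℝ} {a b : ℝ}

lemma aux_le_of_deriv_nonpos (hab : a ≤ b)
    (hc : ContinuousOn g (Set.Icc a b))
    (hd : ∀ x ∈ Set.Ioo a b, HasDerivAt g (g' x) x)
    (hle : ∀ x ∈ Set.Ioo a b, g' x ≤ 0) : g b ≤ g a := by
  have H : AntitoneOn g (Set.Icc a b) := by
    apply antitoneOn_of_deriv_nonpos (convex_Icc a b) hc
    · intro x hx
      rw [interior_Icc] at hx
      exact (hd x hx).differentiableAt.differentiableWithinAt
    · intro x hx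
      rw [interior_Icc] at hx
      rw [(hd x hx).deriv]
      exact hle x hx
  exact H (left_mem_Icc.2 hab) (right_mem_Icc.2 hab) hab

lemma aux_ge_of_deriv_nonneg (hab : a ≤ b)
    (hc : ContinuousOn g (Set.Icc a b))
    (hd : ∀ x ∈ Set.Ioo a b, HasDerivAt g (g' x) x)
    (hle : ∀ x ∈ Set.Ioo a b, 0 ≤ g' x) : g a ≤ g b := by
  have H : MonotoneOn g (Set.Icc a b) := by
    apply monotoneOn_of_deriv_nonneg (convex_Icc a b) hc
    · intro x hx
      rw [interior_Icc] at hx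
      exact (hd x hx).differentiableAt.differentiableWithinAt
    · intro x hx
      rw [interior_Icc] at hx
      rw [(hd x hx).deriv]
      exact hle x hx
  exact H (left_mem_Icc.2 hab) (right_mem_Icc.2 hab) hab

end Helpers


set_option maxHeartbeats 2000000 in
theorem exists_r1_half    (N : ℕ) (hN : 1 < N)
    (ϕ φ : ℝ → ℝ)
    (hϕc : Continuous ϕ) (hϕnn : ∀ s, 0 ≤ ϕ s) (hϕeven : ∀ s, ϕ (-s) = ϕ s)
    (hϕdiff : ∀ s : ℝ, s ≠ 0 → DifferentiableAt ℝ ϕ s)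
    (hϕmono : StrictMonoOn ϕ (Set.Ioi 0))
    (hφ : ∀ s, φ s = ϕ s * s)
    (p c1 c2 : ℝ) (hp : 1 < p) (hc1 : 0 < c1) (hc2 : 0 < c2)
    (hgrow : ∀ r : ℝ, 0 ≤ r → c2 * r ^ (p - 1) ≤ φ r ∧ φ r ≤ c1 * r ^ (p - 1))
    (f : ℝ → ℝ) (hfc : ContinuousOn f (Set.Ici 0)) (hfm : MonotoneOn f (Set.Ici 0))
    (hf0 : f 0 < 0) (u0 : ℝ) (hu0 : 0 < u0) (hfu0 : f u0 = 0)
    (hzero : ∀ s : ℝ, 0 ≤ s → f s = 0 → s = u0)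
    (α L : ℝ) (hα : p - 1 < α)
    (hαsub : p < (N:ℝ) → α < (N:ℝ) * p / ((N:ℝ) - p))
    (hlim : Filter.Tendsto (fun s => f s / s ^ α) Filter.atTop (nhds L)) (hLpos : 0 < L)
    (F : ℝ → ℝ) (hF : ∀ t, F t = ∫ s in (0:ℝ)..t, f s)
    (U0 : ℝ) (hU0 : 0 < U0) (hFU0 : F U0 = 0)
    (hU0uniq : ∀ s : ℝ, 0 < s → F s = 0 → s = U0)
    (hu0U0 : u0 < U0)
 :
    ∃ lam1 : ℝ, 0 < lam1 ∧ ∀ lam : ℝ, lam1 < lam →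
      ∀ u u' : ℝ → ℝ, IsPosSol N φ f lam u u' →
        ∃ r1 ∈ Set.Ioc (0:ℝ) (1/2), u r1 = (u0 + U0) / 2 := by
  have hp1 : (0:ℝ) < p - 1 := by linarith
  have hαpos : 0 < α := by linarith
  set m : ℝ := (u0 + U0) / 2 with hm
  have hmu0 : u0 < m := by rw [hm]; linarith
  have hmU0 : m < U0 := by rw [hm]; linarith
  have hmpos : 0 < m := by linarith
  -- f is positive at m
  have hfmpos : 0 < f m := by
    have h1 : f u0 ≤ f m := hfm (le_of_lt hu0) (le_of_lt hmpos) (le_of_lt hmu0)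
    rcases lt_or_eq_of_le (hfu0 ▸ h1) with h | h
    · exact h
    · exact absurd (hzero m (le_of_lt hmpos) h.symm) (ne_of_gt hmu0)
  -- basic facts about φ
  have hϕpos : ∀ s : ℝ, 0 < s → 0 < ϕ s := by
    intro s hs
    have := hϕmono (show s/2 ∈ Set.Ioi (0:ℝ) by simp; linarith) (show s ∈ Set.Ioi (0:ℝ) from hs) (by linarith)
    have := hϕnn (s/2)
    linarith
  have hφ0 : φ 0 = 0 := by rw [hφ]; ring
  have hφodd : ∀ s : ℝ, φ (-s) = - φ s := by
    intro s; rw [hφ, hφ, hϕeven]; ring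
  have hφnonneg : ∀ s : ℝ, 0 ≤ s → 0 ≤ φ s := by
    intro s hs
    rcases eq_or_lt_of_le hs with h | h
    · rw [← h, hφ0]
    · rw [hφ]; exact le_of_lt (mul_pos (hϕpos s h) h)
  have hφmono : StrictMono φ := by
    have hpos : ∀ x y : ℝ, 0 ≤ x → x < y → φ x < φ y := by
      intro x y hx hxy
      rcases eq_or_lt_of_le hx with h | h
      · rw [← h, hφ0, hφ]
        exact mul_pos (hϕpos y (by linarith)) (by linarith)
      · rw [hφ, hφ]
        have h1 : ϕ x < ϕ y := hϕmono h (by simp; linarith) hxy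
        have := hϕpos x h
        nlinarith
    intro x y hxy
    rcases le_or_gt 0 x with hx | hx
    · exact hpos x y hx hxy
    · rcases le_or_gt y 0 with hy | hy
      · have : φ (-y) < φ (-x) := hpos (-y) (-x) (by linarith) (by linarith)
        rw [hφodd, hφodd] at this; linarith
      · have h1 : φ (-x) > 0 := by rw [hφ]; exact mul_pos (hϕpos _ (by linarith)) (by linarith)
        rw [hφodd] at h1
        have h2 : 0 ≤ φ y := hφnonneg y (le_of_lt hy)
        rcases eq_or_lt_of_le h2 with h | h
        · rw [hφ] at h
          have := hϕpos y hy
          nlinarith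
        · linarith
  have hφcont : Continuous φ := by
    have : φ = fun s => ϕ s * s := funext hφ
    rw [this]; exact hϕc.mul continuous_id
  have hφtop : Filter.Tendsto φ Filter.atTop Filter.atTop := by
    apply Filter.tendsto_atTop_mono' _ _ ((tendsto_rpow_atTop hp1).const_mul_atTop hc2)
    filter_upwards [Filter.eventually_ge_atTop (0:ℝ)] with x hx
    exact (hgrow x hx).1
  have hφbot : Filter.Tendsto φ Filter.atBot Filter.atBot := by
    have h1 : Filter.Tendsto (fun x => -φ (-x)) Filter.atBot Filter.atBot :=
      Filter.tendsto_neg_atTop_atBot.comp (hφtop.comp Filter.tendsto_neg_atBot_atTop)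
    refine h1.congr ?_
    intro x; rw [hφodd]; ring
  have hφsurj : Function.Surjective φ := hφcont.surjective hφtop hφbot
  set e := StrictMono.orderIsoOfSurjective φ hφmono hφsurj with he
  have hecoe : ∀ t, e t = φ t := fun t => rfl
  have hesymm : ∀ t, e.symm (φ t) = t := fun t =>
    StrictMono.orderIsoOfSurjective_symm_apply_self φ hφmono hφsurj t
  have hecont : Continuous (e.symm : ℝ → ℝ) := OrderIso.continuous e.symm
  have hesymm0 : e.symm 0 = 0 := by
    have := hesymm 0; rwa [hφ0] at this
  set ψ : ℝ → ℝ := fun v => ∫ t in (0:ℝ)..v, e.symm t with hψ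
  have hψderiv : ∀ v : ℝ, HasDerivAt ψ (e.symm v) v := by
    intro v
    exact intervalIntegral.integral_hasDerivAt_right
      (hecont.intervalIntegrable 0 v)
      (hecont.stronglyMeasurableAtFilter _ _)
      hecont.continuousAt
  have hψcont : Continuous ψ := by
    have hd : Differentiable ℝ ψ := fun v => (hψderiv v).differentiableAt
    exact hd.continuous
  have hψnonneg : ∀ v : ℝ, 0 ≤ ψ v := by
    intro v
    rcases le_or_gt 0 v with h | h
    · apply intervalIntegral.integral_nonneg h
      intro x hx
      rw [← hesymm0]
      exact e.symm.monotone hx.1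
    · have h2 : (∫ t in v..(0:ℝ), e.symm t) ≤ 0 := by
        have h2a : 0 ≤ ∫ t in v..(0:ℝ), -e.symm t := by
          apply intervalIntegral.integral_nonneg (le_of_lt h)
          intro x hx
          have h2b := e.symm.monotone hx.2
          rw [hesymm0] at h2b
          linarith
        rw [intervalIntegral.integral_neg] at h2a
        linarith
      have h3 : ψ v = -∫ t in v..(0:ℝ), e.symm t := by
        show (∫ t in (0:ℝ)..v, e.symm t) = _
        rw [← intervalIntegral.integral_symm]
      rw [h3]; linarith
  have hψ0 : ψ 0 = 0 := intervalIntegral.integral_same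
  -- facts about F
  have hFint : ∀ x y : ℝ, 0 ≤ x → 0 ≤ y → IntervalIntegrable f volume x y := by
    intro x y hx hy
    apply ContinuousOn.intervalIntegrable
    apply hfc.mono
    intro t ht
    rcases Set.mem_uIcc.1 ht with h | h
    · exact le_trans hx h.1
    · exact le_trans hy h.1
  have hFderiv : ∀ t : ℝ, 0 < t → HasDerivAt F (f t) t := by
    intro t ht
    have h1 : HasDerivAt (fun x => ∫ s in (0:ℝ)..x, f s) (f t) t := by
      apply intervalIntegral.integral_hasDerivAt_right (hFint 0 t le_rfl (le_of_lt ht))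
      · exact ContinuousOn.stronglyMeasurableAtFilter isOpen_Ioi (hfc.mono Set.Ioi_subset_Ici_self) t ht
      · exact (hfc.continuousAt (Ici_mem_nhds ht))
    have : F = fun x => ∫ s in (0:ℝ)..x, f s := funext hF
    rw [this]; exact h1
  have hF0 : F 0 = 0 := by rw [hF]; exact intervalIntegral.integral_same
  have hFcont_pos : ∀ a b : ℝ, 0 < a → a ≤ b → ContinuousOn F (Set.Icc a b) := by
    intro a b ha hab
    intro x hx
    exact ((hFderiv x (lt_of_lt_of_le ha hx.1)).continuousAt).continuousWithinAt
  -- F is negative on (0, U0)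
  have hfneg : ∀ t : ℝ, 0 ≤ t → t < u0 → f t < 0 := by
    intro t ht htu
    have h1 : f t ≤ f u0 := hfm ht (le_of_lt hu0) (le_of_lt htu)
    rcases lt_or_eq_of_le (hfu0 ▸ h1) with h | h
    · exact h
    · exact absurd (hzero t ht h) (ne_of_lt htu)
  have hFneg1 : ∀ t : ℝ, 0 < t → t ≤ u0 → F t < 0 := by
    intro t ht htu
    have hhalf : F (t/2) < 0 := by
      rw [hF]
      have h1 : (∫ s in (0:ℝ)..(t/2), f s) ≤ ∫ s in (0:ℝ)..(t/2), f (t/2) := by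
        apply intervalIntegral.integral_mono_on (by linarith) (hFint 0 (t/2) le_rfl (by linarith))
          (intervalIntegrable_const)
        intro x hx
        exact hfm (Set.mem_Ici.2 hx.1) (Set.mem_Ici.2 (by linarith)) hx.2
      have h2 : (∫ s in (0:ℝ)..(t/2), f (t/2)) = (t/2) * f (t/2) := by
        rw [intervalIntegral.integral_const, smul_eq_mul, sub_zero]
      have h3 : f (t/2) < 0 := hfneg (t/2) (by linarith) (by linarith)
      have h4 : (t/2) * f (t/2) < 0 := mul_neg_of_pos_of_neg (by linarith) h3
      linarith
    have hmono : F t ≤ F (t/2) := by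
      apply aux_le_of_deriv_nonpos (g' := f) (by linarith) (hFcont_pos (t/2) t (by linarith) (by linarith))
      · intro x hx; exact hFderiv x (by linarith [hx.1])
      · intro x hx
        have : f x ≤ f u0 := hfm (Set.mem_Ici.2 (by linarith [hx.1])) (Set.mem_Ici.2 (le_of_lt hu0)) (by linarith [hx.2])
        rw [hfu0] at this; exact this
    linarith
  have hFneg : ∀ t : ℝ, 0 < t → t < U0 → F t < 0 := by
    intro t ht htU
    rcases le_or_gt t u0 with h | h
    · exact hFneg1 t ht h
    · by_contra hcon
      push_neg at hcon
      have hFu0 : F u0 < 0 := hFneg1 u0 hu0 le_rfl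
      have hIVT : ∃ s ∈ Set.Icc u0 t, F s = 0 := by
        have h0 : (0:ℝ) ∈ Set.Icc (F u0) (F t) := ⟨le_of_lt hFu0, hcon⟩
        have := intermediate_value_Icc (le_of_lt h) (hFcont_pos u0 t hu0 (le_of_lt h))
        obtain ⟨s, hs1, hs2⟩ := this h0
        exact ⟨s, hs1, hs2⟩
      obtain ⟨s, hs1, hs2⟩ := hIVT
      have := hU0uniq s (lt_of_lt_of_le hu0 hs1.1) hs2
      rw [this] at hs1
      linarith [hs1.2]
  -- superlinear lower bound for f
  obtain ⟨c0, hc0pos, hc0⟩ : ∃ c0 : ℝ, 0 < c0 ∧ ∀ s : ℝ, m ≤ s → c0 * s ^ α ≤ f s := by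
    have hev : ∀ᶠ s in Filter.atTop, L/2 < f s / s ^ α :=
      hlim.eventually (eventually_gt_nhds (by linarith))
    obtain ⟨S, hS⟩ := Filter.eventually_atTop.1 hev
    set S' := max S (max m 1) with hS'
    have hS'm : m ≤ S' := le_trans (le_max_left m 1) (le_max_right S _)
    have hS'1 : (1:ℝ) ≤ S' := le_trans (le_max_right m 1) (le_max_right S _)
    have hS'pos : (0:ℝ) < S' := by linarith
    have hS'α : 0 < S' ^ α := Real.rpow_pos_of_pos hS'pos α
    refine ⟨min (L/2) (f m / S' ^ α), lt_min (by linarith) (div_pos hfmpos hS'α), ?_⟩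
    intro s hs
    have hspos : 0 < s := lt_of_lt_of_le hmpos hs
    have hsα : 0 < s ^ α := Real.rpow_pos_of_pos hspos α
    rcases le_or_gt s S' with h | h
    · have h1 : f m ≤ f s := hfm (Set.mem_Ici.2 (le_of_lt hmpos)) (Set.mem_Ici.2 (by linarith)) hs
      have h2 : s ^ α ≤ S' ^ α := Real.rpow_le_rpow (le_of_lt hspos) h (le_of_lt hαpos)
      have h3 : min (L/2) (f m / S' ^ α) * s ^ α ≤ (f m / S' ^ α) * s ^ α :=
        mul_le_mul_of_nonneg_right (min_le_right _ _) (le_of_lt hsα)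
      have h4 : (f m / S' ^ α) * s ^ α ≤ f m := by
        rw [div_mul_eq_mul_div, div_le_iff₀ hS'α]
        nlinarith
      linarith
    · have h1 : L/2 < f s / s ^ α := hS s (le_trans (le_max_left _ _) (le_of_lt h))
      have h2 : (L/2) * s ^ α ≤ f s := by
        rw [← le_div_iff₀ hsα]
        exact le_of_lt h1
      have h3 : min (L/2) (f m / S' ^ α) * s ^ α ≤ (L/2) * s ^ α :=
        mul_le_mul_of_nonneg_right (min_le_left _ _) (le_of_lt hsα)
      linarith
  -- constants for the final contradiction
  have hNpos : (0:ℝ) < (N:ℝ) := by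
    have : (0:ℕ) < N := by omega
    exact_mod_cast this
  set β : ℝ := α / (p-1) with hβdef
  have hβ : 1 < β := (one_lt_div hp1).2 hα
  set K : ℝ := c0 / (4 * N * c1) with hKdef
  have hKpos : 0 < K := by
    apply div_pos hc0pos
    positivity
  set B : ℝ := 4 * m ^ (1-β) with hBdef
  have hBpos : 0 < B := by
    have := Real.rpow_pos_of_pos hmpos (1-β)
    positivity
  set R : ℝ := B / (β - 1) + 1 with hRdef
  have hRpos : 0 < R := by
    have h0 : 0 < B / (β-1) := div_pos hBpos (by linarith)
    rw [hRdef]; linarith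
  refine ⟨max 1 (R ^ (p-1) / K), lt_of_lt_of_le zero_lt_one (le_max_left _ _), ?_⟩
  intro lam hlam u u' S
  have hlam1 : 1 < lam := lt_of_le_of_lt (le_max_left _ _) hlam
  have hlam0 : 0 < lam := by linarith
  obtain ⟨w, hwc, hwd⟩ := S.phiC1
  have hucont : ContinuousOn u (Set.Icc 0 1) :=
    fun r hr => (S.hasDeriv r hr).continuousAt.continuousWithinAt
  have hunn : ∀ r ∈ Set.Icc (0:ℝ) 1, 0 ≤ u r := by
    intro r hr
    rcases lt_or_eq_of_le hr.2 with h | h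
    · exact le_of_lt (S.pos r ⟨hr.1, h⟩)
    · rw [h, S.bd]
  have h01 : (0:ℝ) ∈ Set.Icc (0:ℝ) 1 := by norm_num
  have h11 : (1:ℝ) ∈ Set.Icc (0:ℝ) 1 := by norm_num
  have hu0pos : 0 < u 0 := S.pos 0 (by norm_num)
  -- the maximum of u
  obtain ⟨rM, hrM, hMax⟩ := IsCompact.exists_isMaxOn isCompact_Icc
    (Set.nonempty_Icc.2 zero_le_one) hucont
  rw [isMaxOn_iff] at hMax
  set M : ℝ := u rM with hMdef
  have hMpos : 0 < M := lt_of_lt_of_le hu0pos (hMax 0 h01)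
  -- continuity of F on [0, M]
  have hFcontM : ContinuousOn F (Set.Icc 0 M) := by
    have h1 : IntegrableOn f (Set.uIcc 0 M) volume := by
      rw [Set.uIcc_of_le (le_of_lt hMpos)]
      apply ContinuousOn.integrableOn_Icc
      exact hfc.mono (fun t ht => ht.1)
    have h2 := intervalIntegral.continuousOn_primitive_interval h1
    rw [Set.uIcc_of_le (le_of_lt hMpos)] at h2
    have : F = fun x => ∫ t in (0:ℝ)..x, f t := funext hF
    rw [this]
    exact h2
  have hFucont : ContinuousOn (fun r => F (u r)) (Set.Icc 0 1) := by
    apply hFcontM.comp hucont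
    intro r hr
    exact ⟨hunn r hr, hMax r hr⟩
  -- product rule identity for w
  have hprod : ∀ r ∈ Set.Ioo (0:ℝ) 1,
      (↑(N-1) * r ^ (N-1-1)) * φ (u' r) + r^(N-1) * w r = -(lam * r^(N-1) * f (u r)) := by
    intro r hr
    exact HasDerivAt.unique ((hasDerivAt_pow (N-1) r).mul (hwd r hr)) (S.eqn r hr)
  -- the energy function
  set H : ℝ → ℝ := fun r => ψ (φ (u' r)) + lam * F (u r) with hHdef
  have hHd : ∀ r ∈ Set.Ioo (0:ℝ) 1,
      HasDerivAt H (u' r * w r + lam * (f (u r) * u' r)) r := by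
    intro r hr
    have h1 : HasDerivAt (fun s => ψ (φ (u' s))) (u' r * w r) r := by
      have h1a := (hψderiv (φ (u' r))).comp r (hwd r hr)
      rw [hesymm] at h1a
      exact h1a
    have h2 : HasDerivAt (fun s => lam * F (u s)) (lam * (f (u r) * u' r)) r := by
      have h2a := (hFderiv (u r) (S.pos r ⟨hr.1.le, hr.2⟩)).comp r (S.hasDeriv r ⟨hr.1.le, hr.2.le⟩)
      exact h2a.const_mul lam
    exact h1.add h2
  have hHcont : ContinuousOn H (Set.Icc 0 1) := by
    apply ContinuousOn.add
    · exact (hψcont.comp hφcont).comp_continuousOn S.contDeriv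
    · exact continuousOn_const.mul hFucont
  have hH'le : ∀ r ∈ Set.Ioo (0:ℝ) 1, u' r * w r + lam * (f (u r) * u' r) ≤ 0 := by
    intro r hr
    have hrp : (0:ℝ) < r ^ (N-1) := pow_pos hr.1 _
    have hkey : (u' r * w r + lam * (f (u r) * u' r)) * r ^ (N-1)
        = -((↑(N-1) * r ^ (N-1-1)) * (u' r * φ (u' r))) := by
      linear_combination u' r * (hprod r hr)
    have h5 : 0 ≤ (↑(N-1):ℝ) * r ^ (N-1-1) * (u' r * φ (u' r)) := by
      apply mul_nonneg (mul_nonneg (Nat.cast_nonneg _) (pow_nonneg hr.1.le _))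
      rw [hφ]
      nlinarith [mul_nonneg (hϕnn (u' r)) (sq_nonneg (u' r))]
    have h6 : (u' r * w r + lam * (f (u r) * u' r)) * r ^ (N-1) ≤ 0 * r ^ (N-1) := by
      rw [zero_mul]; linarith
    exact le_of_mul_le_mul_right h6 hrp
  have hH10 : H 1 ≤ H 0 := aux_le_of_deriv_nonpos zero_le_one hHcont hHd hH'le
  have hH0 : H 0 = lam * F (u 0) := by
    show ψ (φ (u' 0)) + lam * F (u 0) = lam * F (u 0)
    rw [S.deriv_zero, hφ0, hψ0]; ring
  have hH1 : 0 ≤ H 1 := by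
    show 0 ≤ ψ (φ (u' 1)) + lam * F (u 1)
    rw [S.bd, hF0]
    simpa using hψnonneg (φ (u' 1))
  have hFu00 : 0 ≤ F (u 0) := by
    by_contra hcon
    push_neg at hcon
    have : lam * F (u 0) < 0 := mul_neg_of_pos_of_neg hlam0 hcon
    linarith [hH10, hH1, hH0.symm ▸ hH10]
  have huU0 : U0 ≤ u 0 := by
    by_contra hcon
    push_neg at hcon
    exact absurd hFu00 (not_le.2 (hFneg (u 0) hu0pos hcon))
  -- Part 2: the contradiction for large lam
  by_contra hno
  push_neg at hno
  have humU : m < u 0 := lt_of_lt_of_le hmU0 huU0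
  have hgt : ∀ r ∈ Set.Icc (0:ℝ) (1/2), m < u r := by
    intro r hr
    by_contra hle
    push_neg at hle
    have hrpos : 0 < r := by
      rcases eq_or_lt_of_le hr.1 with h | h
      · exfalso; rw [← h] at hle; linarith
      · exact h
    rcases eq_or_lt_of_le hle with h | h
    · exact hno r ⟨hrpos, hr.2⟩ h
    · have hsub : Set.Icc (0:ℝ) r ⊆ Set.Icc (0:ℝ) 1 :=
        Set.Icc_subset_Icc le_rfl (by linarith [hr.2])
      have hIVT := intermediate_value_Ioo' (le_of_lt hrpos) (hucont.mono hsub)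
      obtain ⟨c, hc, hcm⟩ := hIVT (⟨h, humU⟩ : m ∈ Set.Ioo (u r) (u 0))
      exact hno c ⟨hc.1, le_trans hc.2.le hr.2⟩ hcm
  -- general integral estimate
  have claimGen : ∀ c : ℝ, 0 ≤ c → ∀ r ∈ Set.Ioc (0:ℝ) (1/2),
      (∀ s ∈ Set.Ioo (0:ℝ) r, c ≤ f (u s)) →
      r ^ (N-1) * φ (u' r) ≤ -(lam * c / N * r ^ N) := by
    intro c hc r hr hbound
    have key := aux_le_of_deriv_nonpos
      (g := fun s => s ^ (N-1) * φ (u' s) + lam * c / N * s ^ N)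
      (g' := fun s => -(lam * s ^ (N-1) * f (u s)) + lam * c / N * (N * s ^ (N-1)))
      hr.1.le ?_ ?_ ?_
    · have hz1 : (0:ℝ) ^ (N-1) = 0 := zero_pow (by omega : N-1 ≠ 0)
      have hz2 : (0:ℝ) ^ N = 0 := zero_pow (by omega : N ≠ 0)
      simp only [hz1, hz2, zero_mul, mul_zero, add_zero] at key
      linarith [key]
    · apply ContinuousOn.add
      · exact ((continuous_pow (N-1)).continuousOn.mul
          (hφcont.comp_continuousOn (S.contDeriv.mono
            (Set.Icc_subset_Icc le_rfl (by linarith [hr.2]))))).congr (fun x hx => rfl)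
      · exact continuousOn_const.mul (continuous_pow N).continuousOn
    · intro x hx
      have hx1 : x ∈ Set.Ioo (0:ℝ) 1 := ⟨hx.1, by linarith [hx.2, hr.2]⟩
      exact (S.eqn x hx1).add ((hasDerivAt_pow N x).const_mul (lam * c / N))
    · intro x hx
      have hfx := hbound x hx
      have hxpow : (0:ℝ) ≤ x ^ (N-1) := pow_nonneg hx.1.le _
      have hNne : (N:ℝ) ≠ 0 := ne_of_gt hNpos
      have hNid : lam * c / N * ((N:ℝ) * x ^ (N-1)) = lam * c * x ^ (N-1) := by
        field_simp
      show -(lam * x ^ (N-1) * f (u x)) + lam * c / N * ((N:ℝ) * x ^ (N-1)) ≤ 0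
      rw [hNid]
      have h7 : lam * c ≤ lam * f (u x) := mul_le_mul_of_nonneg_left hfx hlam0.le
      nlinarith [mul_le_mul_of_nonneg_right h7 hxpow]
  -- negativity of u' on (0, 1/2]
  have hu'neg : ∀ r ∈ Set.Ioc (0:ℝ) (1/2), u' r < 0 := by
    intro r hr
    have hb : ∀ s ∈ Set.Ioo (0:ℝ) r, f m ≤ f (u s) := by
      intro s hs
      have hsm : m < u s := hgt s ⟨hs.1.le, by linarith [hs.2, hr.2]⟩
      exact hfm (Set.mem_Ici.2 hmpos.le) (Set.mem_Ici.2 (by linarith)) hsm.le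
    have h1 := claimGen (f m) hfmpos.le r hr hb
    have hrN : 0 < r ^ N := pow_pos hr.1 N
    have hpos : 0 < lam * f m / N * r ^ N := by positivity
    have h2 : r ^ (N-1) * φ (u' r) < 0 := by linarith
    have hrp : 0 < r ^ (N-1) := pow_pos hr.1 _
    have hφneg : φ (u' r) < 0 := by nlinarith
    by_contra hcon
    push_neg at hcon
    linarith [hφnonneg (u' r) hcon]
  -- u is antitone on [0, 1/2]
  have hanti : AntitoneOn u (Set.Icc (0:ℝ) (1/2)) := by
    apply antitoneOn_of_deriv_nonpos (convex_Icc _ _)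
      (hucont.mono (Set.Icc_subset_Icc le_rfl (by norm_num)))
    · intro x hx
      rw [interior_Icc] at hx
      exact (S.hasDeriv x ⟨hx.1.le, by linarith [hx.2]⟩).differentiableAt.differentiableWithinAt
    · intro x hx
      rw [interior_Icc] at hx
      rw [(S.hasDeriv x ⟨hx.1.le, by linarith [hx.2]⟩).deriv]
      exact (hu'neg x ⟨hx.1, hx.2.le⟩).le
  -- the key gradient estimate on [1/4, 1/2]
  have claimB : ∀ r ∈ Set.Icc (1/4:ℝ) (1/2), lam * K * (u r) ^ α ≤ (-(u' r)) ^ (p-1) := by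
    intro r hr
    have hr0 : (0:ℝ) < r := by linarith [hr.1]
    have hrIoc : r ∈ Set.Ioc (0:ℝ) (1/2) := ⟨hr0, hr.2⟩
    have hurm : m < u r := hgt r ⟨hr0.le, hr.2⟩
    have hurpos : 0 < u r := by linarith
    have hb : ∀ s ∈ Set.Ioo (0:ℝ) r, c0 * (u r) ^ α ≤ f (u s) := by
      intro s hs
      have hsIcc : s ∈ Set.Icc (0:ℝ) (1/2) := ⟨hs.1.le, by linarith [hs.2, hr.2]⟩
      have husm : u r ≤ u s := hanti hsIcc ⟨hr0.le, hr.2⟩ hs.2.le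
      calc c0 * (u r) ^ α ≤ f (u r) := hc0 (u r) hurm.le
        _ ≤ f (u s) := hfm (Set.mem_Ici.2 hurpos.le)
            (Set.mem_Ici.2 (by linarith)) husm
    have h1 := claimGen (c0 * (u r) ^ α) (by positivity) r hrIoc hb
    have hrpow : (0:ℝ) < r ^ (N-1) := pow_pos hr0 _
    have hrN : r ^ N = r ^ (N-1) * r := by
      conv_lhs => rw [show N = (N-1) + 1 by omega]
      rw [pow_succ]
    have h2 : φ (u' r) ≤ -(lam * (c0 * u r ^ α) / N * r) := by
      apply le_of_mul_le_mul_right _ hrpow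
      calc φ (u' r) * r ^ (N-1) = r ^ (N-1) * φ (u' r) := by ring
        _ ≤ -(lam * (c0 * u r ^ α) / N * r ^ N) := h1
        _ = -(lam * (c0 * u r ^ α) / N * r) * r ^ (N-1) := by rw [hrN]; ring
    have h4 : lam * (c0 * u r ^ α) / N * r ≤ φ (-(u' r)) := by
      rw [hφodd]; linarith
    have h5 : φ (-(u' r)) ≤ c1 * (-(u' r)) ^ (p-1) :=
      (hgrow (-(u' r)) (by linarith [hu'neg r hrIoc])).2
    have h6 : lam * (c0 * u r ^ α) / N * (1/4) ≤ lam * (c0 * u r ^ α) / N * r :=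
      mul_le_mul_of_nonneg_left hr.1 (by positivity)
    have hNne : (N:ℝ) ≠ 0 := ne_of_gt hNpos
    have hc1ne : c1 ≠ 0 := ne_of_gt hc1
    have h7 : lam * K * u r ^ α * c1 = lam * (c0 * u r ^ α) / N * (1/4) := by
      rw [hKdef]; field_simp
    have h8 : lam * K * u r ^ α * c1 ≤ (-(u' r)) ^ (p-1) * c1 := by
      rw [h7]
      calc lam * (c0 * u r ^ α) / N * (1/4) ≤ lam * (c0 * u r ^ α) / N * r := h6
        _ ≤ φ (-(u' r)) := h4
        _ ≤ c1 * (-(u' r)) ^ (p-1) := h5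
        _ = (-(u' r)) ^ (p-1) * c1 := by ring
    exact le_of_mul_le_mul_right h8 hc1
  -- the slope estimate in terms of rpow
  have hβinv : β = α * (p-1)⁻¹ := by rw [hβdef, div_eq_mul_inv]
  have hp1ne : p - 1 ≠ 0 := ne_of_gt hp1
  set lt' : ℝ := (lam * K) ^ (p-1)⁻¹ with hltdef
  have hlKpos : 0 < lam * K := mul_pos hlam0 hKpos
  have hltpos : 0 < lt' := Real.rpow_pos_of_pos hlKpos _
  have hslope : ∀ r ∈ Set.Ioo (1/4:ℝ) (1/2), lt' * (u r) ^ β ≤ -(u' r) := by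
    intro r hr
    have hrIcc : r ∈ Set.Icc (1/4:ℝ) (1/2) := ⟨hr.1.le, hr.2.le⟩
    have h1 := claimB r hrIcc
    have hurpos : 0 < u r := by
      have := hgt r ⟨by linarith [hr.1], hr.2.le⟩; linarith
    have hu'nn : 0 ≤ -(u' r) := by
      have := hu'neg r ⟨by linarith [hr.1], hr.2.le⟩; linarith
    have h2 : (lam * K * u r ^ α) ^ (p-1)⁻¹ ≤ ((-(u' r)) ^ (p-1)) ^ (p-1)⁻¹ :=
      Real.rpow_le_rpow (by positivity) h1 (by positivity)
    rw [Real.rpow_rpow_inv hu'nn hp1ne] at h2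
    have h3 : (lam * K * u r ^ α) ^ (p-1)⁻¹ = lt' * u r ^ β := by
      rw [hltdef, hβinv, Real.mul_rpow hlKpos.le (Real.rpow_nonneg hurpos.le α),
        ← Real.rpow_mul hurpos.le]
    rw [h3] at h2
    exact h2
  -- the comparison function on [1/4, 1/2]
  have huposI : ∀ x ∈ Set.Icc (1/4:ℝ) (1/2), 0 < u x := by
    intro x hx
    have := hgt x ⟨by linarith [hx.1], hx.2⟩
    linarith
  have hcontq : ContinuousOn (fun r => u r ^ (1-β) - (β-1) * lt' * r)
      (Set.Icc (1/4:ℝ) (1/2)) := by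
    apply ContinuousOn.sub
    · exact ContinuousOn.rpow_const
        (hucont.mono (Set.Icc_subset_Icc (by norm_num) (by norm_num)))
        (fun x hx => Or.inl (ne_of_gt (huposI x hx)))
    · exact continuousOn_const.mul continuousOn_id
  have hderq : ∀ x ∈ Set.Ioo (1/4:ℝ) (1/2),
      HasDerivAt (fun r => u r ^ (1-β) - (β-1) * lt' * r)
        (u' x * (1-β) * u x ^ (1-β-1) - (β-1) * lt') x := by
    intro x hx
    have hux : 0 < u x := huposI x ⟨hx.1.le, hx.2.le⟩
    have h1 : HasDerivAt (fun r => u r ^ (1-β)) (u' x * (1-β) * u x ^ (1-β-1)) x :=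
      HasDerivAt.rpow_const (S.hasDeriv x ⟨by linarith [hx.1], by linarith [hx.2]⟩)
        (Or.inl (ne_of_gt hux))
    have h2 : HasDerivAt (fun r => (β-1) * lt' * r) ((β-1) * lt') x := by
      simpa using (hasDerivAt_id x).const_mul ((β-1) * lt')
    exact h1.sub h2
  have hnnq : ∀ x ∈ Set.Ioo (1/4:ℝ) (1/2),
      0 ≤ u' x * (1-β) * u x ^ (1-β-1) - (β-1) * lt' := by
    intro x hx
    have hux : 0 < u x := huposI x ⟨hx.1.le, hx.2.le⟩
    have hs := hslope x hx
    have hpow : (0:ℝ) < u x ^ (1-β-1) := Real.rpow_pos_of_pos hux _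
    have h3 : (β-1) * (lt' * u x ^ β) * u x ^ (1-β-1) ≤ (β-1) * (-(u' x)) * u x ^ (1-β-1) :=
      mul_le_mul_of_nonneg_right (mul_le_mul_of_nonneg_left hs (by linarith)) hpow.le
    have h4 : u x ^ β * u x ^ (1-β-1) = 1 := by
      rw [← Real.rpow_add hux, show β + (1-β-1) = 0 by ring, Real.rpow_zero]
    have h5 : (β-1) * (lt' * u x ^ β) * u x ^ (1-β-1) = (β-1) * lt' := by
      calc (β-1) * (lt' * u x ^ β) * u x ^ (1-β-1)
          = (β-1) * lt' * (u x ^ β * u x ^ (1-β-1)) := by ring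
        _ = (β-1) * lt' := by rw [h4, mul_one]
    have h6 : u' x * (1-β) * u x ^ (1-β-1) = (β-1) * (-(u' x)) * u x ^ (1-β-1) := by ring
    rw [h6]
    linarith [h3, h5]
  have hq : u (1/4) ^ (1-β) - (β-1) * lt' * (1/4)
      ≤ u (1/2) ^ (1-β) - (β-1) * lt' * (1/2) :=
    aux_ge_of_deriv_nonneg (by norm_num : (1/4:ℝ) ≤ (1/2)) hcontq hderq hnnq
  have hu12 : m ≤ u (1/2) := (hgt (1/2) (by norm_num)).le
  have h8 : u (1/2) ^ (1-β) ≤ m ^ (1-β) :=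
    Real.rpow_le_rpow_of_nonpos hmpos hu12 (by linarith)
  have h9 : (0:ℝ) ≤ u (1/4) ^ (1-β) :=
    Real.rpow_nonneg (huposI (1/4) (by norm_num)).le _
  have h10 : (β-1) * lt' * (1/4) ≤ m ^ (1-β) := by linarith
  have h11 : R ^ (p-1) / K < lam := lt_of_le_of_lt (le_max_right _ _) hlam
  have h12 : R ^ (p-1) < lam * K := by
    rw [div_lt_iff₀ hKpos] at h11; linarith
  have h13 : R < lt' := by
    have h13a := Real.rpow_lt_rpow (Real.rpow_nonneg hRpos.le _) h12
      (by positivity : (0:ℝ) < (p-1)⁻¹)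
    rwa [Real.rpow_rpow_inv hRpos.le hp1ne] at h13a
  have hb1 : β - 1 ≠ 0 := ne_of_gt (by linarith)
  have h15 : (β-1) * R = B + (β-1) := by
    rw [hRdef, mul_add, mul_one, mul_comm (β-1) (B/(β-1)), div_mul_cancel₀ B hb1]
  have h16 : (β-1) * R < (β-1) * lt' := mul_lt_mul_of_pos_left h13 (by linarith)
  have h17 : (β-1) * lt' ≤ B := by rw [hBdef]; linarith
  linarith
end

section
/- For every c > 2 there exists λ₂ > 0 such that for every λ > λ₂ and every positive solution u of the radial problem (r^{N−1} φ(u′(r)))′ = −λ r^{N−1} f(u(r)) on (0,1), u′(0) = 0, u(1) = 0, there exists r₂ ∈ [3/4, 1) with u(r₂) = u₀/c. -/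
open Set Filter MeasureTheory

set_option maxHeartbeats 1000000 in
theorem exists_r2_threequarters    (N : ℕ) (hN : 1 < N)
    (ϕ φ : ℝ → ℝ)
    (hϕc : Continuous ϕ) (hϕnn : ∀ s, 0 ≤ ϕ s) (hϕeven : ∀ s, ϕ (-s) = ϕ s)
    (hϕdiff : ∀ s : ℝ, s ≠ 0 → DifferentiableAt ℝ ϕ s)
    (hϕmono : StrictMonoOn ϕ (Set.Ioi 0))
    (hφ : ∀ s, φ s = ϕ s * s)
    (p c1 c2 : ℝ) (hp : 1 < p) (hc1 : 0 < c1) (hc2 : 0 < c2)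
    (hgrow : ∀ r : ℝ, 0 ≤ r → c2 * r ^ (p - 1) ≤ φ r ∧ φ r ≤ c1 * r ^ (p - 1))
    (f : ℝ → ℝ) (hfc : ContinuousOn f (Set.Ici 0)) (hfm : MonotoneOn f (Set.Ici 0))
    (hf0 : f 0 < 0) (u0 : ℝ) (hu0 : 0 < u0) (hfu0 : f u0 = 0)
    (hzero : ∀ s : ℝ, 0 ≤ s → f s = 0 → s = u0)
    (c : ℝ) (hc : 2 < c) :
    ∃ lam2 : ℝ, 0 < lam2 ∧ ∀ lam : ℝ, lam2 < lam →
      ∀ u u' : ℝ → ℝ, IsPosSol N φ f lam u u' →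
        ∃ r2 ∈ Set.Ico (3/4 : ℝ) 1, u r2 = u0 / c := by
  have hφcont : Continuous φ := by
    have : φ = fun s => ϕ s * s := funext hφ
    rw [this]; exact hϕc.mul continuous_id
  -- m := -f(u0/2) > 0
  obtain ⟨m, hm_def⟩ : ∃ m : ℝ, m = -f (u0 / 2) := ⟨_, rfl⟩
  have hfhalf : f (u0 / 2) < 0 := by
    have hle : f (u0 / 2) ≤ f u0 :=
      hfm (by positivity : (0:ℝ) ≤ u0 / 2) hu0.le (by linarith)
    rcases lt_or_eq_of_le (hle.trans_eq hfu0) with h | h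
    · exact h
    · exfalso
      have := hzero (u0 / 2) (by positivity) h
      linarith
  have hm : 0 < m := by rw [hm_def]; linarith
  obtain ⟨K, hK_def⟩ : ∃ K : ℝ, K = m * (3/4 : ℝ) ^ (N - 1) := ⟨_, rfl⟩
  have hK : 0 < K := by rw [hK_def]; positivity
  have hnum : (0:ℝ) < 8 * c1 * (4 * u0) ^ (p - 1) := by positivity
  refine ⟨8 * c1 * (4 * u0) ^ (p - 1) / K, div_pos hnum hK, ?_⟩
  intro lam hlam u u' sol
  have hlam0 : 0 < lam := lt_trans (div_pos hnum hK) hlam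
  by_contra hcon
  push_neg at hcon
  have hcont : ContinuousOn u (Icc 0 1) := fun r hr =>
    (sol.hasDeriv r hr).continuousAt.continuousWithinAt
  have huc0 : 0 < u0 / c := by positivity
  -- u < u0/c on [3/4, 1]
  have hlt : ∀ r ∈ Icc (3/4 : ℝ) 1, u r < u0 / c := by
    intro r hr
    rcases eq_or_lt_of_le hr.2 with h1 | h1
    · rw [h1, sol.bd]; exact huc0
    · by_contra hge
      push_neg at hge
      have hsub : Icc r 1 ⊆ Icc (0:ℝ) 1 := Icc_subset_Icc (by linarith [hr.1]) le_rfl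
      have hIVT := intermediate_value_Icc' h1.le (hcont.mono hsub)
      have hmem : u0 / c ∈ Icc (u 1) (u r) := ⟨by rw [sol.bd]; exact huc0.le, hge⟩
      obtain ⟨x, hx, hux⟩ := hIVT hmem
      have hx1 : x ≠ 1 := by
        intro h; rw [h, sol.bd] at hux; linarith
      exact hcon x ⟨by linarith [hx.1, hr.1], lt_of_le_of_ne hx.2 hx1⟩ hux
  -- MVT for u on [3/4, 7/8]
  obtain ⟨ξ, hξ, hξs⟩ := exists_hasDerivAt_eq_slope u u' (by norm_num : (3/4:ℝ) < 7/8)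
    (hcont.mono (Icc_subset_Icc (by norm_num) (by norm_num)))
    (fun x hx => sol.hasDeriv x ⟨by linarith [hx.1], by linarith [hx.2]⟩)
  have hu78 : 0 < u (7/8 : ℝ) := sol.pos _ (by norm_num)
  have hu34 : u (3/4 : ℝ) < u0 / c := hlt _ (by norm_num)
  obtain ⟨t, ht_def⟩ : ∃ t : ℝ, t = -u' ξ := ⟨_, rfl⟩
  have hts : u' ξ = 8 * (u (7/8) - u (3/4)) := by rw [hξs]; ring
  have ht4 : t < 4 * u0 := by
    have huc : u0 / c < u0 / 2 := by
      rw [div_lt_div_iff₀ (by linarith) (by norm_num)]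
      nlinarith
    rw [ht_def, hts]
    nlinarith
  -- g := r^(N-1) * φ (u' r)
  set g : ℝ → ℝ := fun s => s ^ (N - 1) * φ (u' s) with hg_def
  have hgc : ContinuousOn g (Icc ξ 1) := by
    have hbase : ContinuousOn g (Icc (0:ℝ) 1) :=
      ((continuous_id.pow (N-1)).continuousOn).mul
        (hφcont.comp_continuousOn sol.contDeriv)
    exact hbase.mono (Icc_subset_Icc (by linarith [hξ.1]) le_rfl)
  have hξ1 : ξ < 1 := by linarith [hξ.2]
  obtain ⟨η, hη, hηs⟩ := exists_hasDerivAt_eq_slope g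
    (fun r => -(lam * r ^ (N - 1) * f (u r))) hξ1 hgc
    (fun x hx => sol.eqn x ⟨by linarith [hξ.1, hx.1], hx.2⟩)
  -- u'(1) ≤ 0 since 1 is a min of u on [0,1]
  have hu'1 : u' 1 ≤ 0 := by
    have hd1 : HasDerivAt u (u' 1) 1 := sol.hasDeriv 1 ⟨zero_le_one, le_refl 1⟩
    have hdw : HasDerivWithinAt u (u' 1) (Iio 1) 1 := hd1.hasDerivWithinAt
    rw [hasDerivWithinAt_iff_tendsto_slope] at hdw
    have hIio : (Iio (1:ℝ)) \ {1} = Iio 1 := by simp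
    rw [hIio] at hdw
    refine le_of_tendsto hdw ?_
    filter_upwards [Ioo_mem_nhdsLT_of_mem (⟨by norm_num, le_refl (1:ℝ)⟩ :
      (1:ℝ) ∈ Ioc (1/2 : ℝ) 1)] with r hr
    have hur : 0 < u r := sol.pos r ⟨by linarith [hr.1], hr.2⟩
    rw [slope_def_field]
    have : (u r - u 1) / (r - 1) ≤ 0 := by
      apply div_nonpos_of_nonneg_of_nonpos
      · rw [sol.bd]; linarith
      · linarith [hr.2]
    simpa [div_eq_inv_mul] using this
  have hg1 : g 1 ≤ 0 := by
    simp only [hg_def, one_pow, one_mul, hφ]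
    exact mul_nonpos_of_nonneg_of_nonpos (hϕnn _) hu'1
  -- f (u η) ≤ -m
  have huη_pos : 0 < u η := sol.pos η ⟨by linarith [hξ.1, hη.1], hη.2⟩
  have huη_lt : u η < u0 / 2 := by
    have h1 : u η < u0 / c := hlt η ⟨by linarith [hξ.1, hη.1], hη.2.le⟩
    have : u0 / c < u0 / 2 := by
      rw [div_lt_div_iff₀ (by linarith) (by norm_num)]; nlinarith
    linarith
  have hfuη : f (u η) ≤ -m := by
    have := hfm huη_pos.le (by positivity : (0:ℝ) ≤ u0 / 2) huη_lt.le
    rw [hm_def]; linarith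
  -- power bounds for η and ξ
  have hηlb : (3/4 : ℝ) ^ (N - 1) ≤ η ^ (N - 1) :=
    pow_le_pow_left₀ (by norm_num) (by linarith [hξ.1, hη.1]) _
  have hηpos : (0:ℝ) < η ^ (N - 1) := by
    have : (0:ℝ) < η := by linarith [hξ.1, hη.1]
    positivity
  have hξpow_pos : (0:ℝ) < ξ ^ (N - 1) := by
    have : (0:ℝ) < ξ := by linarith [hξ.1]
    positivity
  have hξpow_le : ξ ^ (N - 1) ≤ 1 := pow_le_one₀ (by linarith [hξ.1]) hξ1.le
  -- from MVT2: g ξ = g 1 + lam * η^(N-1) * f (u η) * (1 - ξ)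
  have h1ξ : (0:ℝ) < 1 - ξ := by linarith
  have hgξ_eq : g ξ = g 1 + lam * η ^ (N - 1) * f (u η) * (1 - ξ) := by
    have h2 : g 1 - g ξ = -(lam * η ^ (N - 1) * f (u η)) * (1 - ξ) := by
      rw [hηs, div_mul_cancel₀ _ (ne_of_gt h1ξ)]
    linear_combination -h2
  -- bound g ξ
  have hgξ : g ξ ≤ -(lam * K / 8) := by
    have h18 : (1/8 : ℝ) ≤ 1 - ξ := by linarith [hξ.2]
    have hA : lam * (3/4:ℝ) ^ (N-1) * (1/8) ≤ lam * η ^ (N - 1) * (1 - ξ) := by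
      have hA1 : lam * (3/4:ℝ) ^ (N-1) * (1/8) ≤ lam * η ^ (N-1) * (1/8) :=
        mul_le_mul_of_nonneg_right
          (mul_le_mul_of_nonneg_left hηlb hlam0.le) (by norm_num)
      have hA2 : lam * η ^ (N-1) * (1/8) ≤ lam * η ^ (N-1) * (1 - ξ) :=
        mul_le_mul_of_nonneg_left h18 (by positivity)
      linarith
    have hB : lam * η ^ (N - 1) * f (u η) * (1 - ξ)
        ≤ (lam * η ^ (N - 1) * (1 - ξ)) * (-m) := by
      have hpos : 0 < lam * η ^ (N - 1) * (1 - ξ) := by positivity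
      calc lam * η ^ (N - 1) * f (u η) * (1 - ξ)
          = (lam * η ^ (N - 1) * (1 - ξ)) * f (u η) := by ring
        _ ≤ (lam * η ^ (N - 1) * (1 - ξ)) * (-m) :=
            mul_le_mul_of_nonneg_left hfuη hpos.le
    have hC : (lam * η ^ (N - 1) * (1 - ξ)) * (-m)
        ≤ -(lam * K / 8) := by
      have hAm := mul_le_mul_of_nonneg_right hA hm.le
      have hKexp : -(lam * K / 8) = -(lam * (3/4:ℝ) ^ (N-1) * (1/8) * m) := by
        rw [hK_def]; ring
      rw [hKexp]
      linarith [hAm]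
    linarith [hgξ_eq, hg1, hB, hC]
  -- deduce φ (u' ξ) ≤ -(lam*K/8)
  have hφξ : φ (u' ξ) ≤ -(lam * K / 8) := by
    have hBpos : 0 < lam * K / 8 := div_pos (mul_pos hlam0 hK) (by norm_num)
    have hgξ' : ξ ^ (N - 1) * φ (u' ξ) ≤ -(lam * K / 8) := hgξ
    by_contra hgt
    push_neg at hgt
    rcases le_or_gt 0 (φ (u' ξ)) with h | h
    · nlinarith
    · nlinarith [mul_le_mul_of_nonneg_right hξpow_le (neg_nonneg.mpr h.le)]
  have ht0 : 0 < t := by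
    rw [ht_def, neg_pos]
    by_contra hle
    push_neg at hle
    have : 0 ≤ φ (u' ξ) := by
      rw [hφ]; exact mul_nonneg (hϕnn _) hle
    nlinarith
  -- φ t ≥ lam*K/8
  have hφt : lam * K / 8 ≤ φ t := by
    have : φ (u' ξ) = -φ t := by
      rw [hφ, hφ]
      have : u' ξ = -t := by rw [ht_def]; ring
      rw [this, hϕeven]; ring
    linarith [hφξ, this.symm.le]
  -- growth bound: φ t ≤ c1 * t^(p-1) < c1 * (4u0)^(p-1)
  have hgr := (hgrow t ht0.le).2
  have ht0' : (0:ℝ) ≤ t := ht0.le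
  have hrp : t ^ (p - 1) < (4 * u0) ^ (p - 1) :=
    Real.rpow_lt_rpow ht0' ht4 (by linarith)
  have hfin : lam * K / 8 < c1 * (4 * u0) ^ (p - 1) := by
    calc lam * K / 8 ≤ φ t := hφt
      _ ≤ c1 * t ^ (p - 1) := hgr
      _ < c1 * (4 * u0) ^ (p - 1) := by
          exact mul_lt_mul_of_pos_left hrp hc1
  rw [div_lt_iff₀ hK] at hlam
  linarith
end

section
/- If λ > 0 and u is a positive solution of the radial problem, then the energy E(r) := λ F(u(r)) + φ(u′(r)) u′(r) − Φ(u′(r)) is differentiable at every r ∈ (0,1) with E′(r) = −((N−1)/r) φ(u′(r)) u′(r); in particular E′(r) ≤ 0 for all r ∈ (0,1). -/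
open Set Filter MeasureTheory

/-- A nonnegative, even function strictly increasing on `(0,∞)` gives a monotone `s ↦ ϕ s * s`. -/
lemma phi_mul_id_mono (ϕ : ℝ → ℝ) (hϕnn : ∀ s, 0 ≤ ϕ s) (hϕeven : ∀ s, ϕ (-s) = ϕ s)
    (hϕmono : StrictMonoOn ϕ (Set.Ioi 0)) : Monotone (fun s => ϕ s * s) := by
  have key : ∀ a b : ℝ, 0 ≤ a → a ≤ b → ϕ a * a ≤ ϕ b * b := by
    intro a b ha hab
    rcases eq_or_lt_of_le ha with h0 | hapos
    · have hb : 0 ≤ b := le_trans ha hab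
      calc ϕ a * a = 0 := by rw [← h0]; ring
        _ ≤ ϕ b * b := mul_nonneg (hϕnn b) hb
    · rcases eq_or_lt_of_le hab with rfl | hlt
      · exact le_rfl
      · have hϕab : ϕ a ≤ ϕ b :=
          le_of_lt (hϕmono (Set.mem_Ioi.2 hapos) (Set.mem_Ioi.2 (lt_trans hapos hlt)) hlt)
        exact mul_le_mul hϕab hab (le_of_lt hapos) (hϕnn b)
  intro a b hab
  simp only
  rcases le_total 0 a with ha | ha
  · exact key a b ha hab
  · rcases le_total 0 b with hb | hb
    · have h1 : ϕ a * a ≤ 0 := mul_nonpos_of_nonneg_of_nonpos (hϕnn a) ha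
      have h2 : 0 ≤ ϕ b * b := mul_nonneg (hϕnn b) hb
      linarith
    · have := key (-b) (-a) (by linarith) (by linarith)
      rw [hϕeven, hϕeven] at this
      linarith

lemma integral_bounds (φ : ℝ → ℝ) (hc : Continuous φ) (hm : Monotone φ) {a b : ℝ} (hab : a ≤ b) :
    φ a * (b - a) ≤ (∫ s in a..b, φ s) ∧ (∫ s in a..b, φ s) ≤ φ b * (b - a) := by
  constructor
  · have := intervalIntegral.integral_mono_on (μ := volume) hab (intervalIntegrable_const (c := φ a))
      (hc.intervalIntegrable a b) (fun s hs => hm hs.1)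
    simpa [intervalIntegral.integral_const, smul_eq_mul, mul_comm] using this
  · have := intervalIntegral.integral_mono_on (μ := volume) hab (hc.intervalIntegrable a b)
      (intervalIntegrable_const (c := φ b)) (fun s hs => hm hs.2)
    simpa [intervalIntegral.integral_const, smul_eq_mul, mul_comm] using this

/-- The key two-sided estimate for `g p = φ p * p - Φ p`. -/
lemma g_key (φ Φ : ℝ → ℝ) (hc : Continuous φ) (hm : Monotone φ)
    (hΦ : ∀ t, Φ t = ∫ s in (0:ℝ)..t, φ s) (a b : ℝ) :
    0 ≤ (φ b * b - Φ b) - (φ a * a - Φ a) - a * (φ b - φ a) ∧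
      (φ b * b - Φ b) - (φ a * a - Φ a) - a * (φ b - φ a) ≤ (b - a) * (φ b - φ a) := by
  have hint : ∀ x y : ℝ, Φ y - Φ x = ∫ s in x..y, φ s := by
    intro x y
    rw [hΦ, hΦ, ← intervalIntegral.integral_add_adjacent_intervals
      (hc.intervalIntegrable 0 x) (hc.intervalIntegrable x y)]
    ring
  rcases le_total a b with hab | hba
  · obtain ⟨hl, hu⟩ := integral_bounds φ hc hm hab
    have h := hint a b
    constructor <;> nlinarith [h, hl, hu]
  · obtain ⟨hl, hu⟩ := integral_bounds φ hc hm hba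
    have h : Φ b - Φ a = -(∫ s in b..a, φ s) := by
      rw [← hint b a]; ring
    constructor <;> nlinarith [h, hl, hu]

/-- Chain rule for `g ∘ u'` where `g p = φ p * p - Φ p`, requiring only differentiability
of `φ ∘ u'` and continuity of `u'`. -/
lemma g_hasDeriv (φ Φ : ℝ → ℝ) (hc : Continuous φ) (hm : Monotone φ)
    (hΦ : ∀ t, Φ t = ∫ s in (0:ℝ)..t, φ s)
    (u' : ℝ → ℝ) (x W : ℝ) (hW : HasDerivAt (fun s => φ (u' s)) W x)
    (hcont : ContinuousAt u' x) :
    HasDerivAt (fun s => φ (u' s) * u' s - Φ (u' s)) (u' x * W) x := by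
  set g : ℝ → ℝ := fun p => φ p * p - Φ p with hg
  have key : ∀ a b : ℝ, |g b - g a - a * (φ b - φ a)| ≤ |b - a| * |φ b - φ a| := by
    intro a b
    obtain ⟨h0, h1⟩ := g_key φ Φ hc hm hΦ a b
    have : (b - a) * (φ b - φ a) ≤ |b - a| * |φ b - φ a| := by
      calc (b - a) * (φ b - φ a) ≤ |(b - a) * (φ b - φ a)| := le_abs_self _
        _ = |b - a| * |φ b - φ a| := abs_mul _ _
    rw [abs_of_nonneg h0]
    linarith
  rw [hasDerivAt_iff_isLittleO]
  have T2 : (fun y => u' x * ((φ (u' y) - φ (u' x)) - (y - x) * W)) =o[nhds x]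
      fun y => y - x := by
    have h := hasDerivAt_iff_isLittleO.1 hW
    simp only [smul_eq_mul] at h
    simpa [mul_comm] using h.const_mul_left (u' x)
  have h1 : (fun y => u' y - u' x) =o[nhds x] (fun _ => (1:ℝ)) := by
    rw [Asymptotics.isLittleO_one_iff]
    have := hcont.tendsto.sub_const (u' x)
    simpa using this
  have h2 : (fun y => φ (u' y) - φ (u' x)) =O[nhds x] (fun y => y - x) := hW.isBigO_sub
  have h3 := h1.mul_isBigO h2
  have T1 : (fun y => g (u' y) - g (u' x) - u' x * (φ (u' y) - φ (u' x))) =o[nhds x]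
      fun y => y - x := by
    refine Asymptotics.IsBigO.trans_isLittleO ?_ (by simpa using h3)
    refine Asymptotics.isBigO_of_le _ (fun y => ?_)
    have := key (u' x) (u' y)
    simpa [Real.norm_eq_abs, abs_mul] using this
  have := T1.add T2
  refine this.congr_left (fun y => ?_)
  simp only [hg, smul_eq_mul]
  ring

theorem energy_deriv    (N : ℕ) (hN : 1 < N)
    (ϕ φ : ℝ → ℝ)
    (hϕc : Continuous ϕ) (hϕnn : ∀ s, 0 ≤ ϕ s) (hϕeven : ∀ s, ϕ (-s) = ϕ s)
    (hϕdiff : ∀ s : ℝ, s ≠ 0 → DifferentiableAt ℝ ϕ s)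
    (hϕmono : StrictMonoOn ϕ (Set.Ioi 0))
    (hφ : ∀ s, φ s = ϕ s * s)
    (f : ℝ → ℝ) (hfc : ContinuousOn f (Set.Ici 0)) (hfm : MonotoneOn f (Set.Ici 0))
    (hf0 : f 0 < 0) (u0 : ℝ) (hu0 : 0 < u0) (hfu0 : f u0 = 0)
    (hzero : ∀ s : ℝ, 0 ≤ s → f s = 0 → s = u0)
    (F : ℝ → ℝ) (hF : ∀ t, F t = ∫ s in (0:ℝ)..t, f s)
    (Φ : ℝ → ℝ) (hΦ : ∀ t, Φ t = ∫ s in (0:ℝ)..t, φ s)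
    (lam : ℝ) (hlam : 0 < lam) (u u' : ℝ → ℝ) (hu : IsPosSol N φ f lam u u')
    (E : ℝ → ℝ) (hE : ∀ r, E r = lam * F (u r) + φ (u' r) * u' r - Φ (u' r)) :
    ∀ r ∈ Set.Ioo (0:ℝ) 1,
      HasDerivAt E (-(((N:ℝ) - 1) / r) * (φ (u' r) * u' r)) r ∧
      -(((N:ℝ) - 1) / r) * (φ (u' r) * u' r) ≤ 0 := by
  have hφc : Continuous φ := by
    have : φ = fun s => ϕ s * s := funext hφ
    rw [this]; exact hϕc.mul continuous_id
  have hφm : Monotone φ := by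
    have : φ = fun s => ϕ s * s := funext hφ
    rw [this]; exact phi_mul_id_mono ϕ hϕnn hϕeven hϕmono
  obtain ⟨w, hwc, hwd⟩ := hu.phiC1
  intro r hr
  obtain ⟨hr0, hr1⟩ := hr
  have hrIcc : r ∈ Set.Icc (0:ℝ) 1 := ⟨le_of_lt hr0, le_of_lt hr1⟩
  have hur : 0 < u r := hu.pos r ⟨le_of_lt hr0, hr1⟩
  have hud : HasDerivAt u (u' r) r := hu.hasDeriv r hrIcc
  have hu'c : ContinuousAt u' r :=
    hu.contDeriv.continuousAt (Icc_mem_nhds hr0 hr1)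
  -- derivative of F at u r
  have hFd : HasDerivAt F (f (u r)) (u r) := by
    have hFf : F = fun t => ∫ s in (0:ℝ)..t, f s := funext hF
    rw [hFf]
    apply intervalIntegral.integral_hasDerivAt_right
    · apply ContinuousOn.intervalIntegrable
      apply hfc.mono
      rw [Set.uIcc_of_le hur.le]
      exact Set.Icc_subset_Ici_self
    · exact ContinuousOn.stronglyMeasurableAtFilter isOpen_Ioi
        (hfc.mono Set.Ioi_subset_Ici_self) (u r) hur
    · exact hfc.continuousAt (Ici_mem_nhds hur)
  have hF1 : HasDerivAt (fun s => lam * F (u s)) (lam * (f (u r) * u' r)) r :=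
    (hFd.comp r hud).const_mul lam
  -- derivative of the "kinetic" part
  have hvd : HasDerivAt (fun s => φ (u' s)) (w r) r := hwd r ⟨hr0, hr1⟩
  have hGd : HasDerivAt (fun s => φ (u' s) * u' s - Φ (u' s)) (u' r * w r) r :=
    g_hasDeriv φ Φ hφc hφm hΦ u' r (w r) hvd hu'c
  -- determine w r from the equation
  have heq := hu.eqn r ⟨hr0, hr1⟩
  have hprod : HasDerivAt (fun s => s ^ (N - 1) * φ (u' s))
      ((↑(N - 1) * r ^ (N - 1 - 1)) * φ (u' r) + r ^ (N - 1) * w r) r :=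
    (hasDerivAt_pow (N - 1) r).mul hvd
  have huniq : (↑(N - 1) * r ^ (N - 1 - 1)) * φ (u' r) + r ^ (N - 1) * w r
      = -(lam * r ^ (N - 1) * f (u r)) := hprod.unique heq
  have hrk : r ^ (N - 1) = r ^ (N - 1 - 1) * r := by
    rw [← pow_succ]; congr 1; omega
  rw [hrk] at huniq
  have hrpow : r ^ (N - 1 - 1) ≠ 0 := pow_ne_zero _ (ne_of_gt hr0)
  have h4 : ((N - 1 : ℕ) : ℝ) * φ (u' r) + r * w r = -(lam * r * f (u r)) := by
    have h3 : r ^ (N - 1 - 1) * (((N - 1 : ℕ) : ℝ) * φ (u' r) + r * w r)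
        = r ^ (N - 1 - 1) * (-(lam * r * f (u r))) := by linear_combination huniq
    exact mul_left_cancel₀ hrpow h3
  have hcast : ((N - 1 : ℕ) : ℝ) = (N : ℝ) - 1 := by
    rw [Nat.cast_sub (le_of_lt hN), Nat.cast_one]
  rw [hcast] at h4
  constructor
  · have hEe : E = fun s => lam * F (u s) + (φ (u' s) * u' s - Φ (u' s)) := by
      funext s; rw [hE]; ring
    rw [hEe]
    have hsum := hF1.add hGd
    have hrne : r ≠ 0 := ne_of_gt hr0
    have hwval : w r = -(lam * f (u r)) - (((N : ℝ) - 1) / r) * φ (u' r) := by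
      field_simp
      linear_combination h4
    refine hsum.congr_deriv ?_
    rw [hwval]
    ring
  · have h1 : 0 ≤ φ (u' r) * u' r := by
      rw [hφ]
      calc (0:ℝ) ≤ ϕ (u' r) * (u' r * u' r) := mul_nonneg (hϕnn _) (mul_self_nonneg _)
        _ = ϕ (u' r) * u' r * u' r := by ring
    have h2 : 0 ≤ ((N : ℝ) - 1) / r := by
      apply div_nonneg _ (le_of_lt hr0)
      have : (1 : ℝ) < (N : ℝ) := by exact_mod_cast hN
      linarith
    rw [neg_mul]
    exact neg_nonpos_of_nonneg (mul_nonneg h2 h1)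
end

section
/- If λ > 0 and u is a positive solution of the radial problem, then the energy E(r) := λ F(u(r)) + φ(u′(r)) u′(r) − Φ(u′(r)) satisfies E(r) ≥ 0 for all r ∈ [0,1]. -/
open Set Filter MeasureTheory Asymptotics Topology

lemma legendre_hasDerivAt (φ Φ : ℝ → ℝ)
    (hsq : ∀ a b : ℝ, a ≤ b → φ a * (b - a) ≤ Φ b - Φ a ∧ Φ b - Φ a ≤ φ b * (b - a))
    (hmono : Monotone φ)
    (v : ℝ → ℝ) (r w : ℝ) (hv : ContinuousAt v r)
    (hψ : HasDerivAt (fun s => φ (v s)) w r) :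
    HasDerivAt (fun s => φ (v s) * v s - Φ (v s)) (v r * w) r := by
  have hO : (fun s => φ (v s) - φ (v r)) =O[𝓝 r] fun s => s - r := hψ.isBigO_sub
  rw [hasDerivAt_iff_isLittleO] at hψ ⊢
  have hRle : ∀ s, ‖(v s - v r) * φ (v s) - (Φ (v s) - Φ (v r))‖ ≤
      ‖(v s - v r) * (φ (v s) - φ (v r))‖ := by
    intro s
    rcases le_total (v r) (v s) with h | h
    · obtain ⟨h1, h2⟩ := hsq _ _ h
      have hm := hmono h
      rw [Real.norm_eq_abs, Real.norm_eq_abs, abs_of_nonneg (by nlinarith),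
        abs_of_nonneg (by nlinarith)]
      nlinarith
    · obtain ⟨h1, h2⟩ := hsq _ _ h
      have hm := hmono h
      rw [Real.norm_eq_abs, Real.norm_eq_abs, abs_of_nonneg (by nlinarith),
        abs_of_nonneg (by nlinarith)]
      nlinarith
  have ho1 : (fun s => v s - v r) =o[𝓝 r] (fun _ : ℝ => (1:ℝ)) := by
    rw [isLittleO_one_iff]
    simpa using hv.tendsto.sub_const (v r)
  have hprod : (fun s => (v s - v r) * (φ (v s) - φ (v r))) =o[𝓝 r] fun s => s - r := by
    simpa using ho1.mul_isBigO hO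
  have hR : (fun s => (v s - v r) * φ (v s) - (Φ (v s) - Φ (v r))) =o[𝓝 r] fun s => s - r :=
    (Asymptotics.isBigO_of_le _ hRle).trans_isLittleO hprod
  have h1 : (fun s => v r * ((φ (v s) - φ (v r)) - (s - r) • w)) =o[𝓝 r] fun s => s - r :=
    hψ.const_mul_left (v r)
  have := h1.add hR
  refine this.congr' (Eventually.of_forall fun s => ?_) (Eventually.of_forall fun s => rfl)
  simp only [smul_eq_mul]
  ring

theorem energy_nonneg    (N : ℕ) (hN : 1 < N)
    (ϕ φ : ℝ → ℝ)
    (hϕc : Continuous ϕ) (hϕnn : ∀ s, 0 ≤ ϕ s) (hϕeven : ∀ s, ϕ (-s) = ϕ s)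
    (hϕdiff : ∀ s : ℝ, s ≠ 0 → DifferentiableAt ℝ ϕ s)
    (hϕmono : StrictMonoOn ϕ (Set.Ioi 0))
    (hφ : ∀ s, φ s = ϕ s * s)
    (f : ℝ → ℝ) (hfc : ContinuousOn f (Set.Ici 0)) (hfm : MonotoneOn f (Set.Ici 0))
    (hf0 : f 0 < 0) (u0 : ℝ) (hu0 : 0 < u0) (hfu0 : f u0 = 0)
    (hzero : ∀ s : ℝ, 0 ≤ s → f s = 0 → s = u0)
    (F : ℝ → ℝ) (hF : ∀ t, F t = ∫ s in (0:ℝ)..t, f s)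
    (Φ : ℝ → ℝ) (hΦ : ∀ t, Φ t = ∫ s in (0:ℝ)..t, φ s)
    (lam : ℝ) (hlam : 0 < lam) (u u' : ℝ → ℝ) (hu : IsPosSol N φ f lam u u')
    (E : ℝ → ℝ) (hE : ∀ r, E r = lam * F (u r) + φ (u' r) * u' r - Φ (u' r)) :
    ∀ r ∈ Set.Icc (0:ℝ) 1, 0 ≤ E r := by
  -- φ is continuous and monotone
  have hφc : Continuous φ := by
    have : φ = fun s => ϕ s * s := funext hφ
    rw [this]; exact hϕc.mul continuous_id
  have hφmono : Monotone φ := by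
    have key : ∀ p q : ℝ, 0 ≤ p → p ≤ q → φ p ≤ φ q := by
      intro p q hp hpq
      rw [hφ, hφ]
      rcases eq_or_lt_of_le hp with h0 | h0
      · subst h0
        simpa using mul_nonneg (hϕnn q) hpq
      · rcases eq_or_lt_of_le hpq with h1 | h1
        · rw [h1]
        · have := le_of_lt (hϕmono (mem_Ioi.2 h0) (mem_Ioi.2 (lt_trans h0 h1)) h1)
          nlinarith [hϕnn q, hϕnn p]
    intro p q hpq
    rcases le_total 0 p with hp | hp
    · exact key p q hp hpq
    · rcases le_total q 0 with hq | hq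
      · have h1 := key (-q) (-p) (by linarith) (by linarith)
        rw [hφ, hφ] at h1 ⊢
        rw [hϕeven] at h1; rw [hϕeven] at h1
        nlinarith
      · rw [hφ, hφ]
        nlinarith [hϕnn p, hϕnn q, mul_nonneg (hϕnn q) hq]
  -- the squeeze inequality for Φ
  have hsq : ∀ a b : ℝ, a ≤ b → φ a * (b - a) ≤ Φ b - Φ a ∧ Φ b - Φ a ≤ φ b * (b - a) := by
    intro a b hab
    have hint : Φ b - Φ a = ∫ s in a..b, φ s := by
      rw [hΦ, hΦ]
      exact intervalIntegral.integral_interval_sub_left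
        (hφc.intervalIntegrable 0 b) (hφc.intervalIntegrable 0 a)
    constructor
    · rw [hint]
      calc φ a * (b - a) = ∫ _ in a..b, φ a := by
            rw [intervalIntegral.integral_const]; rw [smul_eq_mul]; ring
        _ ≤ ∫ s in a..b, φ s := by
            apply intervalIntegral.integral_mono_on hab
              (intervalIntegrable_const) (hφc.intervalIntegrable a b)
            intro x hx; exact hφmono hx.1
    · rw [hint]
      calc (∫ s in a..b, φ s) ≤ ∫ _ in a..b, φ b := by
            apply intervalIntegral.integral_mono_on hab
              (hφc.intervalIntegrable a b) (intervalIntegrable_const)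
            intro x hx; exact hφmono hx.2
        _ = φ b * (b - a) := by
            rw [intervalIntegral.integral_const]; rw [smul_eq_mul]; ring
  have hΦ0 : Φ 0 = 0 := by rw [hΦ]; simp
  have hkey : ∀ t : ℝ, Φ t ≤ φ t * t := by
    intro t
    rcases le_total 0 t with ht | ht
    · have := (hsq 0 t ht).2
      rw [hΦ0] at this; linarith [this]
    · have := (hsq t 0 ht).1
      rw [hΦ0] at this; nlinarith
  -- continuous extension g of f, primitive G
  set g : ℝ → ℝ := fun t => f (max t 0) with hg
  have hgc : Continuous g :=
    hfc.comp_continuous (continuous_id.max continuous_const) (fun x => le_max_right x 0)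
  set G : ℝ → ℝ := fun t => ∫ s in (0:ℝ)..t, g s with hGdef
  have hG : ∀ t : ℝ, HasDerivAt G (g t) t := fun t =>
    (hgc.integral_hasStrictDerivAt 0 t).hasDerivAt
  have hFG : ∀ t : ℝ, 0 ≤ t → F t = G t := by
    intro t ht
    rw [hF, hGdef]
    apply intervalIntegral.integral_congr
    intro x hx
    rw [uIcc_of_le ht] at hx
    simp [hg, max_eq_left hx.1]
  -- nonnegativity of u on [0,1]
  have hnn : ∀ s ∈ Icc (0:ℝ) 1, 0 ≤ u s := by
    intro s hs
    rcases eq_or_lt_of_le hs.2 with h1 | h1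
    · rw [h1, hu.bd]
    · exact le_of_lt (hu.pos s ⟨hs.1, h1⟩)
  obtain ⟨w, hwc, hw⟩ := hu.phiC1
  -- Φ is continuous
  have hΦc : Continuous Φ := by
    have h : Φ = fun t => ∫ s in (0:ℝ)..t, φ s := funext hΦ
    rw [h]
    exact continuous_iff_continuousAt.2 fun t =>
      ((hφc.integral_hasStrictDerivAt 0 t).hasDerivAt).continuousAt
  -- continuity of E on [0,1]
  have huc : ContinuousOn u (Icc 0 1) := fun s hs =>
    ((hu.hasDeriv s hs).continuousAt).continuousWithinAt
  have hEcont : ContinuousOn E (Icc 0 1) := by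
    have heq : EqOn E (fun s => lam * G (u s) + (φ (u' s) * u' s - Φ (u' s))) (Icc 0 1) := by
      intro s hs
      rw [hE, hFG _ (hnn s hs)]; ring
    refine ContinuousOn.congr ?_ heq
    have hGc : Continuous G := continuous_iff_continuousAt.2 fun t => (hG t).continuousAt
    exact ((continuousOn_const.mul (hGc.comp_continuousOn huc))).add
      (((hφc.comp_continuousOn hu.contDeriv).mul hu.contDeriv).sub
        (hΦc.comp_continuousOn hu.contDeriv))
  -- derivative of E at interior points
  have hderiv : ∀ r ∈ Ioo (0:ℝ) 1, HasDerivAt E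
      (lam * (f (u r) * u' r) + u' r * w r) r := by
    intro r hr
    have hur : HasDerivAt u (u' r) r := hu.hasDeriv r (Ioo_subset_Icc_self hr)
    have hGu : HasDerivAt (fun s => G (u s)) (g (u r) * u' r) r :=
      (hG (u r)).comp r hur
    have hgu : g (u r) = f (u r) := by
      simp [hg, max_eq_left (le_of_lt (hu.pos r ⟨le_of_lt hr.1, hr.2⟩))]
    rw [hgu] at hGu
    have hvc : ContinuousAt u' r :=
      hu.contDeriv.continuousAt (Icc_mem_nhds hr.1 hr.2)
    have hH : HasDerivAt (fun s => φ (u' s) * u' s - Φ (u' s)) (u' r * w r) r :=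
      legendre_hasDerivAt φ Φ hsq hφmono u' r (w r) hvc (hw r hr)
    have hEt : HasDerivAt (fun s => lam * G (u s) + (φ (u' s) * u' s - Φ (u' s)))
        (lam * (f (u r) * u' r) + u' r * w r) r := (hGu.const_mul lam).add hH
    apply hEt.congr_of_eventuallyEq
    filter_upwards [isOpen_Ioo.mem_nhds hr] with s hs
    rw [hE, hFG _ (hnn s (Ioo_subset_Icc_self hs))]; ring
  -- the derivative value is nonpositive
  have hDnp : ∀ r ∈ Ioo (0:ℝ) 1, lam * (f (u r) * u' r) + u' r * w r ≤ 0 := by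
    intro r hr
    have h1 := hu.eqn r hr
    have h2 : HasDerivAt (fun s => s ^ (N - 1) * φ (u' s))
        ((N - 1 : ℕ) * r ^ (N - 1 - 1) * φ (u' r) + r ^ (N - 1) * w r) r :=
      (hasDerivAt_pow (N - 1) r).mul (hw r hr)
    have heq := h2.unique h1
    have hrpow : (0:ℝ) < r ^ (N - 1) := pow_pos hr.1 _
    have hrpow2 : (0:ℝ) ≤ r ^ (N - 1 - 1) := le_of_lt (pow_pos hr.1 _)
    have hc : (0:ℝ) ≤ (N - 1 : ℕ) := Nat.cast_nonneg _
    have hφu : 0 ≤ φ (u' r) * u' r := by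
      rw [hφ]; nlinarith [hϕnn (u' r), sq_nonneg (u' r)]
    have hkey2 : r ^ (N-1) * (lam * (f (u r) * u' r) + u' r * w r)
        = -((N - 1 : ℕ) * r ^ (N-1-1) * (φ (u' r) * u' r)) := by
      linear_combination (u' r) * heq
    nlinarith [mul_nonneg (mul_nonneg hc hrpow2) hφu, hkey2, hrpow]
  -- E is antitone on [0,1]
  have hanti : AntitoneOn E (Icc 0 1) := by
    apply antitoneOn_of_deriv_nonpos (convex_Icc 0 1) hEcont
    · rw [interior_Icc]
      exact fun x hx => ((hderiv x hx).differentiableAt).differentiableWithinAt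
    · rw [interior_Icc]
      intro x hx
      rw [(hderiv x hx).deriv]
      exact hDnp x hx
  -- conclude
  have hE1 : 0 ≤ E 1 := by
    rw [hE, hu.bd, hF]
    simp only [intervalIntegral.integral_same]
    have := hkey (u' 1)
    nlinarith
  intro r hr
  have := hanti hr (right_mem_Icc.2 zero_le_one) hr.2
  linarith
end

section
/- If λ > 0 and u is a positive solution of the radial problem (r^{N−1} φ(u′(r)))′ = −λ r^{N−1} f(u(r)) on (0,1), u′(0) = 0, u(1) = 0, then u′(r) < 0 for all r ∈ (0,1) and u′(1) ≤ 0; in particular u is strictly decreasing on [0,1]. -/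
open Set Filter MeasureTheory Topology

lemma myFTC {v : ℝ → ℝ} (hv : Continuous v) (t : ℝ) :
    HasDerivAt (fun x => ∫ s in (0:ℝ)..x, v s) (v t) t :=
  intervalIntegral.integral_hasDerivAt_right (hv.intervalIntegrable _ _)
    (hv.stronglyMeasurableAtFilter _ _) hv.continuousAt

set_option maxHeartbeats 1000000 in
theorem solution_deriv_neg    (N : ℕ) (hN : 1 < N)
    (ϕ φ : ℝ → ℝ)
    (hϕc : Continuous ϕ) (hϕnn : ∀ s, 0 ≤ ϕ s) (hϕeven : ∀ s, ϕ (-s) = ϕ s)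
    (hϕdiff : ∀ s : ℝ, s ≠ 0 → DifferentiableAt ℝ ϕ s)
    (hϕmono : StrictMonoOn ϕ (Set.Ioi 0))
    (hφ : ∀ s, φ s = ϕ s * s)
    (p c1 c2 : ℝ) (hp : 1 < p) (hc1 : 0 < c1) (hc2 : 0 < c2)
    (hgrow : ∀ r : ℝ, 0 ≤ r → c2 * r ^ (p - 1) ≤ φ r ∧ φ r ≤ c1 * r ^ (p - 1))
    (f : ℝ → ℝ) (hfc : ContinuousOn f (Set.Ici 0)) (hfm : MonotoneOn f (Set.Ici 0))
    (hf0 : f 0 < 0) (u0 : ℝ) (hu0 : 0 < u0) (hfu0 : f u0 = 0)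
    (hzero : ∀ s : ℝ, 0 ≤ s → f s = 0 → s = u0)
    (lam : ℝ) (hlam : 0 < lam) (u u' : ℝ → ℝ) (hu : IsPosSol N φ f lam u u') :
    (∀ r ∈ Set.Ioo (0:ℝ) 1, u' r < 0) ∧ u' 1 ≤ 0 ∧ StrictAntiOn u (Set.Icc 0 1) := by
  -- ## basic facts about φ
  have hφ0 : φ 0 = 0 := by rw [hφ]; ring
  have hφodd : ∀ s, φ (-s) = - φ s := by intro s; rw [hφ, hφ, hϕeven]; ring
  have hφpos : ∀ s : ℝ, 0 < s → 0 < φ s := by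
    intro s hs
    have h1 := (hgrow s hs.le).1
    have h2 : (0:ℝ) < c2 * s ^ (p-1) := mul_pos hc2 (Real.rpow_pos_of_pos hs _)
    linarith
  have hφneg : ∀ s : ℝ, s < 0 → φ s < 0 := by
    intro s hs
    have := hφpos (-s) (by linarith)
    rw [hφodd] at this; linarith
  have hφnonneg : ∀ s : ℝ, 0 ≤ s → 0 ≤ φ s := by
    intro s hs
    rcases eq_or_lt_of_le hs with h | h
    · rw [← h, hφ0]
    · exact (hφpos s h).le
  have hφnonpos : ∀ s : ℝ, s ≤ 0 → φ s ≤ 0 := by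
    intro s hs
    rcases eq_or_lt_of_le hs with h | h
    · rw [h, hφ0]
    · exact (hφneg s h).le
  have hsφ : ∀ s : ℝ, 0 ≤ s * φ s := by
    intro s
    rcases lt_trichotomy s 0 with h | h | h
    · exact le_of_lt (mul_pos_of_neg_of_neg h (hφneg s h))
    · rw [h]; simp
    · exact le_of_lt (mul_pos h (hφpos s h))
  have hφmono0 : ∀ a b : ℝ, 0 ≤ a → a < b → φ a < φ b := by
    intro a b ha hab
    rcases eq_or_lt_of_le ha with h | h
    · rw [← h, hφ0]; exact hφpos b (by linarith)
    · have hb : 0 < b := lt_trans h hab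
      have h1 : ϕ a < ϕ b := hϕmono h hb hab
      have h2 : 0 < ϕ b := by
        have := hφpos b hb
        rw [hφ] at this
        nlinarith
      rw [hφ, hφ]
      nlinarith [hϕnn a]
  have hφsm : StrictMono φ := by
    intro a b hab
    rcases le_or_gt 0 a with ha | ha
    · exact hφmono0 a b ha hab
    · rcases le_or_gt b 0 with hb | hb
      · have := hφmono0 (-b) (-a) (by linarith) (by linarith)
        rw [hφodd, hφodd] at this; linarith
      · exact lt_trans (hφneg a ha) (hφpos b hb)
  have hφcont : Continuous φ := by
    have : φ = fun s => ϕ s * s := funext hφ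
    rw [this]; exact hϕc.mul continuous_id
  have hφzero : ∀ s : ℝ, φ s = 0 → s = 0 := by
    intro s hs
    exact hφsm.injective (by rw [hs, hφ0])
  have hφtop : Tendsto φ atTop atTop := by
    apply tendsto_atTop_mono' _ _ ((tendsto_rpow_atTop (by linarith : (0:ℝ) < p - 1)).const_mul_atTop hc2)
    filter_upwards [eventually_ge_atTop (0:ℝ)] with s hs
    exact (hgrow s hs).1
  have hφbot : Tendsto φ atBot atBot := by
    have h1 : Tendsto (fun s : ℝ => -φ (-s)) atBot atBot :=
      tendsto_neg_atTop_atBot.comp (hφtop.comp tendsto_neg_atBot_atTop)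
    have : (fun s : ℝ => -φ (-s)) = φ := by
      funext s; rw [hφodd]; ring
    rwa [this] at h1
  have hφsurj : Function.Surjective φ := Continuous.surjective hφcont hφtop hφbot
  -- ## the inverse ψ of φ
  set e := StrictMono.orderIsoOfSurjective φ hφsm hφsurj with he_def
  set ψ : ℝ → ℝ := fun t => e.symm t with hψ_def
  have hψcont : Continuous ψ := OrderIso.continuous _
  have hψφ : ∀ s, ψ (φ s) = s := by
    intro s
    have h : φ s = e s := (congrFun (StrictMono.coe_orderIsoOfSurjective φ hφsm hφsurj) s).symm
    simp only [hψ_def, h]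
    exact e.symm_apply_apply s
  have hψ0 : ψ 0 = 0 := by have h := hψφ 0; rwa [hφ0] at h
  have hψmono : Monotone ψ := e.symm.monotone
  have hψnn : ∀ t : ℝ, 0 ≤ t → 0 ≤ ψ t := by
    intro t ht; rw [← hψ0]; exact hψmono ht
  have hψnp : ∀ t : ℝ, t ≤ 0 → ψ t ≤ 0 := by
    intro t ht; rw [← hψ0]; exact hψmono ht
  -- ## facts about f
  have hfneg : ∀ s : ℝ, 0 ≤ s → s < u0 → f s < 0 := by
    intro s hs hsu
    have h1 : f s ≤ f u0 := hfm hs hu0.le hsu.le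
    rcases eq_or_lt_of_le h1 with h | h
    · rw [hfu0] at h
      exact absurd (hzero s hs h) (ne_of_lt hsu)
    · rw [hfu0] at h; exact h
  have hfpos : ∀ s : ℝ, u0 < s → 0 < f s := by
    intro s hs
    have h1 : f u0 ≤ f s := hfm hu0.le (le_trans hu0.le hs.le) hs.le
    rcases eq_or_lt_of_le h1 with h | h
    · rw [hfu0] at h
      exact absurd (hzero s (le_trans hu0.le hs.le) h.symm) (ne_of_gt hs)
    · rw [hfu0] at h; exact h
  -- ## extension of f, and primitives F, G
  set fe : ℝ → ℝ := fun t => f (max t 0) with hfe_def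
  have hfe_cont : Continuous fe := by
    have hclamp : Continuous fun t : ℝ => max t 0 := continuous_id.max continuous_const
    exact hfc.comp_continuous hclamp fun x => Set.mem_Ici.mpr (le_max_right _ _)
  have hfe_eq : ∀ t : ℝ, 0 ≤ t → fe t = f t := by
    intro t ht; simp only [hfe_def, max_eq_left ht]
  set F : ℝ → ℝ := fun t => ∫ s in (0:ℝ)..t, fe s with hF_def
  have hF : ∀ t, HasDerivAt F (fe t) t := myFTC hfe_cont
  have hFcont : Continuous F := by
    rw [continuous_iff_continuousAt]; exact fun t => (hF t).continuousAt
  have hF0 : F 0 = 0 := intervalIntegral.integral_same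
  have hFneg : ∀ t : ℝ, 0 < t → t ≤ u0 → F t < 0 := by
    intro t ht htu
    have hpos : 0 < ∫ s in (0:ℝ)..t, (fun x => -fe x) s := by
      apply intervalIntegral.intervalIntegral_pos_of_pos_on ((hfe_cont.neg).intervalIntegrable _ _) _ ht
      intro x hx
      have : f x < 0 := hfneg x hx.1.le (lt_of_lt_of_le hx.2 htu)
      show 0 < -fe x
      rw [hfe_eq x hx.1.le]
      linarith
    rw [intervalIntegral.integral_neg] at hpos
    simp only [hF_def]; linarith
  set G : ℝ → ℝ := fun t => ∫ s in (0:ℝ)..t, ψ s with hG_def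
  have hG : ∀ t, HasDerivAt G (ψ t) t := myFTC hψcont
  have hGcont : Continuous G := by
    rw [continuous_iff_continuousAt]; exact fun t => (hG t).continuousAt
  have hG0 : G 0 = 0 := intervalIntegral.integral_same
  have hGnn : ∀ t : ℝ, 0 ≤ G t := by
    intro t
    rcases le_or_gt 0 t with h | h
    · exact intervalIntegral.integral_nonneg h fun s hs => hψnn s hs.1
    · have h1 : 0 ≤ ∫ s in t..(0:ℝ), (fun x => -ψ x) s :=
        intervalIntegral.integral_nonneg h.le fun s hs => by
          have := hψnp s hs.2
          show 0 ≤ -ψ s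
          linarith
      rw [intervalIntegral.integral_neg] at h1
      have h2 : G t = -∫ s in t..(0:ℝ), ψ s := by
        simp only [hG_def]; rw [intervalIntegral.integral_symm]
      rw [h2]; linarith
  -- ## facts about u
  have hucont : ContinuousOn u (Icc 0 1) := fun r hr =>
    (hu.hasDeriv r hr).continuousAt.continuousWithinAt
  have unn : ∀ r ∈ Icc (0:ℝ) 1, 0 ≤ u r := by
    intro r hr
    rcases lt_or_eq_of_le hr.2 with h | h
    · exact (hu.pos r ⟨hr.1, h⟩).le
    · rw [h, hu.bd]
  -- ## the function g and the identity r^(N-1) φ(u' r) = -λ g r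
  set k := N - 1 with hk_def
  have hk1 : 1 ≤ k := by omega
  have hkne : k ≠ 0 := by omega
  set cl : ℝ → ℝ := fun s => min (max s 0) 1 with hcl_def
  have hclcont : Continuous cl := (continuous_id.max continuous_const).min continuous_const
  have hclmem : ∀ s, cl s ∈ Icc (0:ℝ) 1 :=
    fun s => ⟨le_min (le_max_right _ _) zero_le_one, min_le_right _ _⟩
  have hcl_eq : ∀ s ∈ Icc (0:ℝ) 1, cl s = s := by
    intro s hs; simp only [hcl_def]; rw [max_eq_left hs.1, min_eq_left hs.2]
  set vg : ℝ → ℝ := fun s => s ^ k * fe (u (cl s)) with hvg_def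
  have hvgcont : Continuous vg :=
    (continuous_pow k).mul (hfe_cont.comp (hucont.comp_continuous hclcont hclmem))
  have hvg_eq : ∀ s ∈ Icc (0:ℝ) 1, vg s = s ^ k * f (u s) := by
    intro s hs
    simp only [hvg_def]
    rw [hcl_eq s hs, hfe_eq _ (unn s hs)]
  set g : ℝ → ℝ := fun r => ∫ s in (0:ℝ)..r, vg s with hg_def
  have hg : ∀ t, HasDerivAt g (vg t) t := myFTC hvgcont
  have hgcont : Continuous g := by
    rw [continuous_iff_continuousAt]; exact fun t => (hg t).continuousAt
  have hg0 : g 0 = 0 := intervalIntegral.integral_same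
  have hgdiff : ∀ a b : ℝ, g b - g a = ∫ s in a..b, vg s := by
    intro a b
    have i1 : IntervalIntegrable vg volume 0 a := hvgcont.intervalIntegrable 0 a
    have i2 : IntervalIntegrable vg volume a b := hvgcont.intervalIntegrable a b
    have h := intervalIntegral.integral_add_adjacent_intervals i1 i2
    simp only [hg_def]
    linarith
  have hH : ∀ r ∈ Icc (0:ℝ) 1, r ^ k * φ (u' r) = -(lam * g r) := by
    set D : ℝ → ℝ := fun r => r ^ k * φ (u' r) + lam * g r with hD_def
    have hDc : ContinuousOn D (Icc 0 1) :=
      (((continuous_pow k).continuousOn).mul (hφcont.comp_continuousOn hu.contDeriv)).add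
        ((continuous_const.mul hgcont).continuousOn)
    have hDd : ∀ x ∈ Ioo (0:ℝ) 1, HasDerivAt D 0 x := by
      intro x hx
      have h1 := (hu.eqn x hx).add ((hg x).const_mul lam)
      have h2 : -(lam * x ^ (N-1) * f (u x)) + lam * vg x = 0 := by
        rw [hvg_eq x ⟨hx.1.le, hx.2.le⟩]
        ring
      rw [h2] at h1
      exact h1
    have hconst : ∀ x ∈ Ioc (0:ℝ) 1, D 1 = D x := by
      intro x hx
      have := constant_of_has_deriv_right_zero (f := D) (a := x) (b := 1)
        (hDc.mono (Icc_subset_Icc hx.1.le le_rfl))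
        (fun y hy => (hDd y ⟨lt_of_lt_of_le hx.1 hy.1, hy.2⟩).hasDerivWithinAt)
      exact this 1 ⟨hx.2, le_rfl⟩
    have hD0 : D 0 = 0 := by
      simp only [hD_def]
      rw [zero_pow hkne, hg0]
      ring
    have hD1 : D 1 = 0 := by
      have hne : (𝓝[Ioc (0:ℝ) 1] 0).NeBot := by
        rw [← mem_closure_iff_nhdsWithin_neBot, closure_Ioc (one_ne_zero).symm]
        exact ⟨le_rfl, zero_le_one⟩
      have t1 : Tendsto D (𝓝[Ioc (0:ℝ) 1] 0) (𝓝 (D 0)) :=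
        (hDc 0 ⟨le_rfl, zero_le_one⟩).mono_left (nhdsWithin_mono _ Ioc_subset_Icc_self)
      have t2 : Tendsto D (𝓝[Ioc (0:ℝ) 1] 0) (𝓝 (D 1)) := by
        have hev : (fun _ : ℝ => D 1) =ᶠ[𝓝[Ioc (0:ℝ) 1] 0] D :=
          eventually_nhdsWithin_of_forall fun x hx => hconst x hx
        exact Tendsto.congr' hev tendsto_const_nhds
      rw [← hD0]
      exact tendsto_nhds_unique t2 t1
    intro r hr
    have hr0 : D r = 0 := by
      rcases eq_or_lt_of_le hr.1 with h | h
      · rw [← h]; exact hD0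
      · rw [← hD1]; exact (hconst r ⟨h, hr.2⟩).symm
    simp only [hD_def] at hr0
    linarith
  -- ## sign transfer lemmas
  have hsign_neg : ∀ r ∈ Ioc (0:ℝ) 1, 0 < g r → u' r < 0 := by
    intro r hr hgr
    have h1 := hH r ⟨hr.1.le, hr.2⟩
    have hrk : (0:ℝ) < r ^ k := pow_pos hr.1 k
    have h2 : φ (u' r) < 0 := by nlinarith
    by_contra h
    exact absurd h2 (not_lt.mpr (hφnonneg _ (not_lt.mp h)))
  have hsign_pos : ∀ r ∈ Ioc (0:ℝ) 1, g r < 0 → 0 < u' r := by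
    intro r hr hgr
    have h1 := hH r ⟨hr.1.le, hr.2⟩
    have hrk : (0:ℝ) < r ^ k := pow_pos hr.1 k
    have h2 : 0 < φ (u' r) := by nlinarith
    by_contra h
    exact absurd h2 (not_lt.mpr (hφnonpos _ (not_lt.mp h)))
  have hsign_zero : ∀ r ∈ Ioc (0:ℝ) 1, g r = 0 → u' r = 0 := by
    intro r hr hgr
    have h1 := hH r ⟨hr.1.le, hr.2⟩
    have hrk : (0:ℝ) < r ^ k := pow_pos hr.1 k
    rw [hgr] at h1
    have h2 : φ (u' r) = 0 := by
      have := mul_eq_zero.mp (by linarith : r ^ k * φ (u' r) = 0)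
      rcases this with h | h
      · exact absurd h (ne_of_gt hrk)
      · exact h
    exact hφzero _ h2
  -- ## the energy lemma
  obtain ⟨w, hwc, hw⟩ := hu.phiC1
  have key : ∀ q ∈ Ico (0:ℝ) 1, u' q = 0 → u q ≤ u0 → False := by
    intro q hq hq' hqu
    set E : ℝ → ℝ := fun r => lam * F (u r) + G (φ (u' r)) with hE_def
    have hEc : ContinuousOn E (Icc 0 1) :=
      ((continuous_const.mul hFcont).comp_continuousOn hucont).add
        ((hGcont.comp hφcont).comp_continuousOn hu.contDeriv)
    have hEd : ∀ r ∈ Ioo (0:ℝ) 1, HasDerivAt E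
        (lam * (fe (u r) * u' r) + ψ (φ (u' r)) * w r) r := by
      intro r hr
      have h1 : HasDerivAt (fun s => F (u s)) (fe (u r) * u' r) r :=
        (hF (u r)).comp r (hu.hasDeriv r ⟨hr.1.le, hr.2.le⟩)
      have h2 : HasDerivAt (fun s => G (φ (u' s))) (ψ (φ (u' r)) * w r) r :=
        by have h := (hG (φ (u' r))).comp r (hw r hr); exact h
      exact (h1.const_mul lam).add h2
    have hEderiv : ∀ r ∈ Ioo (0:ℝ) 1, deriv E r ≤ 0 := by
      intro r hr
      rw [(hEd r hr).deriv]
      have hprod : HasDerivAt (fun s => s ^ k * φ (u' s))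
          ((k : ℝ) * r ^ (k - 1) * φ (u' r) + r ^ k * w r) r :=
        (hasDerivAt_pow k r).mul (hw r hr)
      have h2 : (k : ℝ) * r ^ (k - 1) * φ (u' r) + r ^ k * w r
          = -(lam * r ^ k * f (u r)) := hprod.unique (hu.eqn r hr)
      have hfeq : fe (u r) = f (u r) := hfe_eq _ (unn r ⟨hr.1.le, hr.2.le⟩)
      have hψeq : ψ (φ (u' r)) = u' r := hψφ _
      rw [hfeq, hψeq]
      have hkey : (lam * (f (u r) * u' r) + u' r * w r) * r ^ k
          = -((k : ℝ) * r ^ (k - 1) * (u' r * φ (u' r))) := by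
        linear_combination (u' r) * h2
      have h3 : 0 ≤ u' r * φ (u' r) := hsφ _
      have h4 : 0 ≤ (k : ℝ) * r ^ (k - 1) * (u' r * φ (u' r)) := by
        apply mul_nonneg (mul_nonneg (Nat.cast_nonneg _) (pow_nonneg hr.1.le _)) h3
      have hrk : (0:ℝ) < r ^ k := pow_pos hr.1 k
      nlinarith
    have hEanti : AntitoneOn E (Icc 0 1) := by
      apply antitoneOn_of_deriv_nonpos (convex_Icc 0 1) hEc
      · intro x hx
        rw [interior_Icc] at hx
        exact (hEd x hx).differentiableAt.differentiableWithinAt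
      · intro x hx
        rw [interior_Icc] at hx
        exact hEderiv x hx
    have hE1 : E 1 ≤ E q := hEanti ⟨hq.1, hq.2.le⟩ ⟨zero_le_one, le_rfl⟩ hq.2.le
    have hEq : E q = lam * F (u q) := by
      simp only [hE_def]
      rw [hq', hφ0, hG0, add_zero]
    have hE1v : E 1 = G (φ (u' 1)) := by
      simp only [hE_def]
      rw [hu.bd, hF0, mul_zero, zero_add]
    have hFuq : F (u q) < 0 := hFneg _ (hu.pos q hq) hqu
    have : lam * F (u q) < 0 := mul_neg_of_pos_of_neg hlam hFuq
    rw [hEq] at hE1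
    rw [hE1v] at hE1
    have := hGnn (φ (u' 1))
    linarith
  -- ## u' 1 ≤ 0
  have hu'1 : u' 1 ≤ 0 := by
    by_contra h
    push_neg at h
    have hd := hu.hasDeriv 1 ⟨zero_le_one, le_rfl⟩
    rw [hasDerivAt_iff_tendsto_slope] at hd
    have hd' : Tendsto (slope u 1) (𝓝[<] 1) (𝓝 (u' 1)) :=
      hd.mono_left (nhdsWithin_mono _ fun x hx => ne_of_lt hx)
    have hev : ∀ᶠ x in 𝓝[<] (1:ℝ), 0 < slope u 1 x :=
      hd'.eventually (eventually_gt_nhds h)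
    have hev2 : Ioo (0:ℝ) 1 ∈ 𝓝[<] (1:ℝ) := Ioo_mem_nhdsLT_of_mem ⟨zero_lt_one, le_rfl⟩
    obtain ⟨x, hx1, hx2⟩ := (hev.and (eventually_of_mem hev2 fun x hx => hx)).exists
    have hx3 : u x > 0 := hu.pos x ⟨hx2.1.le, hx2.2⟩
    have : slope u 1 x = (u x - u 1) / (x - 1) := by
      rw [slope_def_field]
    rw [this, hu.bd, sub_zero] at hx1
    have h6 : x - 1 < 0 := by linarith [hx2.2]
    have := div_pos_iff.mp hx1
    rcases this with ⟨h7, h8⟩ | ⟨h7, h8⟩ <;> linarith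
  -- ## g is positive near 1
  have hnear : ∃ r₁ : ℝ, 0 ≤ r₁ ∧ r₁ < 1 ∧ ∀ s, r₁ ≤ s → s ≤ 1 → u s < u0 := by
    have hcw : ContinuousWithinAt u (Icc 0 1) 1 := hucont 1 ⟨zero_le_one, le_rfl⟩
    have hmem : u ⁻¹' (Iio u0) ∈ 𝓝[Icc (0:ℝ) 1] 1 := by
      apply hcw
      apply Iio_mem_nhds
      rw [hu.bd]; exact hu0
    rw [mem_nhdsWithin] at hmem
    obtain ⟨U, hUopen, hU1, hUsub⟩ := hmem
    obtain ⟨ε, hε, hball⟩ := Metric.isOpen_iff.mp hUopen 1 hU1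
    refine ⟨max (1 - ε/2) 0, le_max_right _ _, ?_, ?_⟩
    · apply max_lt (by linarith) zero_lt_one
    · intro s hs1 hs2
      have hs0 : 0 ≤ s := le_trans (le_max_right _ _) hs1
      have hsl : 1 - ε/2 ≤ s := le_trans (le_max_left _ _) hs1
      have : s ∈ U := by
        apply hball
        rw [Metric.mem_ball, Real.dist_eq, abs_sub_lt_iff]
        constructor <;> linarith
      exact hUsub ⟨this, hs0, hs2⟩
  obtain ⟨r₁, hr₁0, hr₁1, hr₁⟩ := hnear
  have hg1 : 0 ≤ g 1 := by
    have h1 := hH 1 ⟨zero_le_one, le_rfl⟩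
    rw [one_pow] at h1
    have h2 : φ (u' 1) ≤ 0 := hφnonpos _ hu'1
    nlinarith
  have hgnear : ∀ r, r₁ ≤ r → r < 1 → 0 < g r := by
    intro r hrr hr1
    have hr0 : 0 ≤ r := le_trans hr₁0 hrr
    have hI : 0 < ∫ s in r..1, (fun x => -vg x) s := by
      apply intervalIntegral.intervalIntegral_pos_of_pos_on ((hvgcont.neg).intervalIntegrable _ _) _ hr1
      intro x hx
      have hx0 : 0 < x := lt_of_le_of_lt hr0 hx.1
      have hxI : x ∈ Icc (0:ℝ) 1 := ⟨hx0.le, hx.2.le⟩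
      have hux : u x < u0 := hr₁ x (le_trans hrr hx.1.le) hx.2.le
      have hfux : f (u x) < 0 := hfneg _ (unn x hxI) hux
      show 0 < -vg x
      rw [hvg_eq x hxI]
      nlinarith [pow_pos hx0 k]
    rw [intervalIntegral.integral_neg] at hI
    have h2 : g 1 - g r = ∫ s in r..1, vg s := hgdiff r 1
    linarith
  -- ## g is positive on (0,1)
  have gpos : ∀ r ∈ Ioo (0:ℝ) 1, 0 < g r := by
    by_contra hcon
    push_neg at hcon
    obtain ⟨ρ, hρmem, hρ⟩ := hcon
    set S : Set ℝ := {r | r ∈ Ioo (0:ℝ) 1 ∧ g r ≤ 0} with hS_def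
    have hSne : S.Nonempty := ⟨ρ, hρmem, hρ⟩
    have hSsub : ∀ x ∈ S, x ≤ r₁ := by
      intro x hx
      by_contra hxr
      push_neg at hxr
      exact absurd hx.2 (not_le.mpr (hgnear x hxr.le hx.1.2))
    have hSbdd : BddAbove S := ⟨r₁, hSsub⟩
    set ρ' := sSup S with hρ'_def
    have hρ'pos : 0 < ρ' := lt_of_lt_of_le hρmem.1 (le_csSup hSbdd ⟨hρmem, hρ⟩)
    have hρ'le : ρ' ≤ r₁ := csSup_le hSne hSsub
    have hρ'1 : ρ' < 1 := lt_of_le_of_lt hρ'le hr₁1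
    have hgρ'le : g ρ' ≤ 0 := by
      have h1 : ρ' ∈ closure S := csSup_mem_closure hSne hSbdd
      have h2 : closure S ⊆ {x | g x ≤ 0} :=
        closure_minimal (fun x hx => hx.2) (isClosed_le hgcont continuous_const)
      exact h2 h1
    have hgright : ∀ x, ρ' < x → x < 1 → 0 < g x := by
      intro x hx1 hx2
      by_contra hgx
      push_neg at hgx
      have : x ∈ S := ⟨⟨lt_trans hρ'pos hx1, hx2⟩, hgx⟩
      exact absurd (le_csSup hSbdd this) (not_le.mpr hx1)
    have hgρ'ge : 0 ≤ g ρ' := by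
      have ht : Tendsto g (𝓝[>] ρ') (𝓝 (g ρ')) :=
        hgcont.continuousAt.tendsto.mono_left nhdsWithin_le_nhds
      apply ge_of_tendsto ht
      filter_upwards [Ioo_mem_nhdsGT_of_mem ⟨le_rfl, hρ'1⟩] with x hx
      exact (hgright x hx.1 hx.2).le
    have hgρ' : g ρ' = 0 := le_antisymm hgρ'le hgρ'ge
    have hu'ρ' : u' ρ' = 0 := hsign_zero ρ' ⟨hρ'pos, hρ'1.le⟩ hgρ'
    rcases le_or_gt (u ρ') u0 with hcase | hcase
    · exact key ρ' ⟨hρ'pos.le, hρ'1⟩ hu'ρ' hcase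
    · -- u ρ' > u0 : find the point a to the left
      have hρ'I : ρ' ∈ Icc (0:ℝ) 1 := ⟨hρ'pos.le, hρ'1.le⟩
      -- u > u0 near ρ' within Icc 0 1
      have hδ : ∃ δ > 0, ∀ s ∈ Icc (0:ℝ) 1, |s - ρ'| < δ → u0 < u s := by
        have hcw : ContinuousWithinAt u (Icc 0 1) ρ' := hucont ρ' hρ'I
        have hmem : u ⁻¹' (Ioi u0) ∈ 𝓝[Icc (0:ℝ) 1] ρ' := hcw (Ioi_mem_nhds hcase)
        rw [mem_nhdsWithin] at hmem
        obtain ⟨U, hUopen, hU1, hUsub⟩ := hmem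
        obtain ⟨ε, hε, hball⟩ := Metric.isOpen_iff.mp hUopen ρ' hU1
        refine ⟨ε, hε, fun s hs hsd => ?_⟩
        have : s ∈ U := by
          apply hball
          rwa [Metric.mem_ball, Real.dist_eq]
        exact hUsub ⟨this, hs⟩
      obtain ⟨δ, hδ0, hδ⟩ := hδ
      set m := max (ρ' - δ/2) (ρ'/2) with hm_def
      have hm0 : 0 < m := lt_of_lt_of_le (by linarith) (le_max_right _ _)
      have hmρ' : m < ρ' := max_lt (by linarith) (by linarith)
      have hmδ : ρ' - δ < m := lt_of_lt_of_le (by linarith) (le_max_left _ _)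
      have hgneg : ∀ r, m ≤ r → r < ρ' → g r < 0 := by
        intro r hmr hrρ'
        have hI : 0 < ∫ s in r..ρ', vg s := by
          apply intervalIntegral.intervalIntegral_pos_of_pos_on (hvgcont.intervalIntegrable _ _) _ hrρ'
          intro x hx
          have hx0 : 0 < x := lt_of_lt_of_le hm0 (le_trans hmr hx.1.le)
          have hxI : x ∈ Icc (0:ℝ) 1 := ⟨hx0.le, le_trans hx.2.le hρ'1.le⟩
          have hxd : |x - ρ'| < δ := by
            have hx1 := hx.1
            have hx2 := hx.2
            rw [abs_sub_lt_iff]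
            constructor <;> linarith
          have hux : u0 < u x := hδ x hxI hxd
          have hfux : 0 < f (u x) := hfpos _ hux
          rw [hvg_eq x hxI]
          nlinarith [pow_pos hx0 k]
        have h2 : g ρ' - g r = ∫ s in r..ρ', vg s := hgdiff r ρ'
        rw [hgρ'] at h2
        linarith
      set A : Set ℝ := {r | r ∈ Icc (0:ℝ) m ∧ 0 ≤ g r} with hA_def
      have hAne : A.Nonempty := ⟨0, ⟨le_rfl, hm0.le⟩, by rw [hg0]⟩
      have hAbdd : BddAbove A := ⟨m, fun x hx => hx.1.2⟩
      set a := sSup A with ha_def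
      have ha0 : 0 ≤ a := le_csSup hAbdd ⟨⟨le_rfl, hm0.le⟩, by rw [hg0]⟩
      have ham : a ≤ m := csSup_le hAne fun x hx => hx.1.2
      have haρ' : a < ρ' := lt_of_le_of_lt ham hmρ'
      have hga_ge : 0 ≤ g a := by
        have h1 : a ∈ closure A := csSup_mem_closure hAne hAbdd
        have h2 : closure A ⊆ {x | 0 ≤ g x} :=
          closure_minimal (fun x hx => hx.2) (isClosed_le continuous_const hgcont)
        exact h2 h1
      have hgmid : ∀ r, a < r → r < ρ' → g r < 0 := by
        intro r har hrρ'
        rcases le_or_gt r m with hrm | hrm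
        · by_contra hgr
          push_neg at hgr
          have : r ∈ A := ⟨⟨le_trans ha0 har.le, hrm⟩, hgr⟩
          exact absurd (le_csSup hAbdd this) (not_le.mpr har)
        · exact hgneg r hrm.le hrρ'
      have hga_le : g a ≤ 0 := by
        have ht : Tendsto g (𝓝[>] a) (𝓝 (g a)) :=
          hgcont.continuousAt.tendsto.mono_left nhdsWithin_le_nhds
        apply le_of_tendsto ht
        filter_upwards [Ioo_mem_nhdsGT_of_mem ⟨le_rfl, haρ'⟩] with x hx
        exact (hgmid x hx.1 hx.2).le
      have hga : g a = 0 := le_antisymm hga_le hga_ge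
      have hu'a : u' a = 0 := by
        rcases eq_or_lt_of_le ha0 with h | h
        · rw [← h]; exact hu.deriv_zero
        · exact hsign_zero a ⟨h, le_trans ham (le_trans hmρ'.le hρ'1.le)⟩ hga
      have ha1 : a < 1 := lt_trans haρ' hρ'1
      -- u is strictly monotone on [a, ρ']
      have humono : StrictMonoOn u (Icc a ρ') := by
        apply strictMonoOn_of_deriv_pos (convex_Icc a ρ')
        · exact hucont.mono (Icc_subset_Icc ha0 hρ'1.le)
        · intro x hx
          rw [interior_Icc] at hx
          have hxI : x ∈ Icc (0:ℝ) 1 :=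
            ⟨le_trans ha0 hx.1.le, le_trans hx.2.le hρ'1.le⟩
          rw [(hu.hasDeriv x hxI).deriv]
          exact hsign_pos x ⟨lt_of_le_of_lt ha0 hx.1, hxI.2⟩ (hgmid x hx.1 hx.2)
      have hua : u a ≤ u0 := by
        by_contra hua
        push_neg at hua
        have hI : 0 < ∫ s in a..ρ', vg s := by
          apply intervalIntegral.intervalIntegral_pos_of_pos_on (hvgcont.intervalIntegrable _ _) _ haρ'
          intro x hx
          have hx0 : 0 < x := lt_of_le_of_lt ha0 hx.1
          have hxI : x ∈ Icc (0:ℝ) 1 := ⟨hx0.le, le_trans hx.2.le hρ'1.le⟩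
          have hux : u a < u x := humono ⟨le_rfl, haρ'.le⟩ ⟨hx.1.le, hx.2.le⟩ hx.1
          have hfux : 0 < f (u x) := hfpos _ (lt_trans hua hux)
          rw [hvg_eq x hxI]
          nlinarith [pow_pos hx0 k]
        have h2 : g ρ' - g a = ∫ s in a..ρ', vg s := hgdiff a ρ'
        rw [hgρ', hga] at h2
        linarith
      exact key a ⟨ha0, ha1⟩ hu'a hua
  -- ## assembly
  have hderivneg : ∀ r ∈ Ioo (0:ℝ) 1, u' r < 0 := fun r hr =>
    hsign_neg r ⟨hr.1, hr.2.le⟩ (gpos r hr)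
  refine ⟨hderivneg, hu'1, ?_⟩
  apply strictAntiOn_of_deriv_neg (convex_Icc 0 1) hucont
  intro x hx
  rw [interior_Icc] at hx
  rw [(hu.hasDeriv x ⟨hx.1.le, hx.2.le⟩).deriv]
  exact hderivneg x hx
end

section
/- Let λ > 0 and let u be a positive solution of the radial problem with u′ ≤ 0 on [3/4,1] and u(r) < u₀/2 for all r ∈ [3/4, 1). Then there is a constant C > 0, independent of λ and u, such that u(r) ≥ C λ^{1/(p−1)} (1 − r)^{p/(p−1)} for all r ∈ [3/4, 1). -/
open Set Filter MeasureTheory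

set_option maxHeartbeats 1000000

theorem lower_bound_near_boundary    (N : ℕ) (hN : 1 < N)
    (ϕ φ : ℝ → ℝ)
    (hϕc : Continuous ϕ) (hϕnn : ∀ s, 0 ≤ ϕ s) (hϕeven : ∀ s, ϕ (-s) = ϕ s)
    (hϕdiff : ∀ s : ℝ, s ≠ 0 → DifferentiableAt ℝ ϕ s)
    (hϕmono : StrictMonoOn ϕ (Set.Ioi 0))
    (hφ : ∀ s, φ s = ϕ s * s)
    (p c1 c2 : ℝ) (hp : 1 < p) (hc1 : 0 < c1) (hc2 : 0 < c2)
    (hgrow : ∀ r : ℝ, 0 ≤ r → c2 * r ^ (p - 1) ≤ φ r ∧ φ r ≤ c1 * r ^ (p - 1))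
    (f : ℝ → ℝ) (hfc : ContinuousOn f (Set.Ici 0)) (hfm : MonotoneOn f (Set.Ici 0))
    (hf0 : f 0 < 0) (u0 : ℝ) (hu0 : 0 < u0) (hfu0 : f u0 = 0)
    (hzero : ∀ s : ℝ, 0 ≤ s → f s = 0 → s = u0)
 :
    ∃ C : ℝ, 0 < C ∧
      ∀ lam : ℝ, 0 < lam → ∀ u u' : ℝ → ℝ, IsPosSol N φ f lam u u' →
        (∀ r ∈ Set.Icc (3/4 : ℝ) 1, u' r ≤ 0) →
        (∀ r ∈ Set.Ico (3/4 : ℝ) 1, u r < u0 / 2) →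
        ∀ r ∈ Set.Ico (3/4 : ℝ) 1,
          C * lam ^ (1 / (p - 1)) * (1 - r) ^ (p / (p - 1)) ≤ u r := by
  have hp1 : (0:ℝ) < p - 1 := by linarith
  have hp0 : (0:ℝ) < p := by linarith
  have hpne : p ≠ 0 := ne_of_gt hp0
  have hp1ne : p - 1 ≠ 0 := ne_of_gt hp1
  have hqpos : 0 < p / (p - 1) := div_pos hp0 hp1
  have hq1 : (1:ℝ) ≤ p / (p - 1) := (one_le_div hp1).mpr (by linarith)
  have hqm1 : p / (p - 1) - 1 = 1 / (p - 1) := by field_simp; ring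
  -- φ is continuous and odd
  have hφfun : φ = fun s => ϕ s * s := funext hφ
  have hφc : Continuous φ := by rw [hφfun]; exact hϕc.mul continuous_id
  have hφodd : ∀ s, φ (-s) = -φ s := by
    intro s; rw [hφ, hφ, hϕeven]; ring
  -- f (u0/2) < 0
  have hhalf_mem : (u0 / 2 : ℝ) ∈ Set.Ici (0:ℝ) := by
    simp only [Set.mem_Ici]; linarith
  have hm : f (u0 / 2) < 0 := by
    have h1 : f (u0 / 2) ≤ f u0 :=
      hfm hhalf_mem (by simp only [Set.mem_Ici]; linarith) (by linarith)
    rcases lt_or_eq_of_le h1 with h | h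
    · rwa [hfu0] at h
    · exfalso
      have := hzero (u0 / 2) (by linarith) (by rw [h, hfu0])
      linarith
  obtain ⟨m, hm_def, hmpos⟩ : ∃ m : ℝ, m = -f (u0 / 2) ∧ 0 < m :=
    ⟨_, rfl, by linarith⟩
  obtain ⟨K, hK_def, hKpos⟩ : ∃ K : ℝ, K = m * (3/4 : ℝ) ^ (N - 1) ∧ 0 < K :=
    ⟨_, rfl, mul_pos hmpos (pow_pos (by norm_num) _)⟩
  refine ⟨(K / c1) ^ (1 / (p - 1)) * ((p - 1) / p), ?_, ?_⟩
  · exact mul_pos (Real.rpow_pos_of_pos (div_pos hKpos hc1) _)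
      (div_pos hp1 hp0)
  intro lam hlam u u' hsol hu'np hult r hr
  obtain ⟨hrL, hrU⟩ := hr
  -- membership helpers
  have hsubIcc : Set.Icc (3/4 : ℝ) 1 ⊆ Set.Icc (0:ℝ) 1 :=
    Set.Icc_subset_Icc (by norm_num) le_rfl
  have hsubIoo : Set.Ioo (3/4 : ℝ) 1 ⊆ Set.Ioo (0:ℝ) 1 :=
    Set.Ioo_subset_Ioo (by norm_num) le_rfl
  have hLK : 0 ≤ lam * K := mul_nonneg hlam.le hKpos.le
  -- Step A : s ↦ s^(N-1) φ(u' s) - lam*K*s is monotone on [3/4,1]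
  have hmonoh : MonotoneOn (fun s => s ^ (N - 1) * φ (u' s) - lam * K * s)
      (Set.Icc (3/4 : ℝ) 1) := by
    apply monotoneOn_of_deriv_nonneg (convex_Icc _ _)
    · exact (((continuous_pow (N-1)).continuousOn.mul
        (hφc.comp_continuousOn (hsol.contDeriv.mono hsubIcc)))).sub
        ((continuous_const.mul continuous_id).continuousOn)
    · intro x hx
      rw [interior_Icc] at hx
      have hlin : HasDerivAt (fun s : ℝ => lam * K * s) (lam * K) x := by
        simpa using (hasDerivAt_id x).const_mul (lam * K)
      exact ((hsol.eqn x (hsubIoo hx)).sub hlin).differentiableAt.differentiableWithinAt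
    · intro x hx
      rw [interior_Icc] at hx
      have hlin : HasDerivAt (fun s : ℝ => lam * K * s) (lam * K) x := by
        simpa using (hasDerivAt_id x).const_mul (lam * K)
      have hD : HasDerivAt (fun s => s ^ (N - 1) * φ (u' s) - lam * K * s)
          (-(lam * x ^ (N - 1) * f (u x)) - lam * K) x :=
        (hsol.eqn x (hsubIoo hx)).sub hlin
      rw [hD.deriv]
      have hux0 : 0 ≤ u x := (hsol.pos x ⟨(hsubIoo hx).1.le, hx.2⟩).le
      have hfle : f (u x) ≤ f (u0 / 2) :=
        hfm (Set.mem_Ici.mpr hux0) hhalf_mem (hult x ⟨hx.1.le, hx.2⟩).le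
      have hpow : (3/4 : ℝ) ^ (N - 1) ≤ x ^ (N - 1) :=
        pow_le_pow_left₀ (by norm_num) hx.1.le _
      have hpowpos : (0:ℝ) < (3/4 : ℝ) ^ (N - 1) := pow_pos (by norm_num) _
      have h1 : lam * K ≤ lam * (x ^ (N - 1) * (-f (u x))) := by
        rw [hK_def]
        apply mul_le_mul_of_nonneg_left _ hlam.le
        calc m * (3/4:ℝ) ^ (N-1) = (3/4:ℝ) ^ (N-1) * m := by ring
        _ ≤ x ^ (N-1) * (-f (u x)) :=
          mul_le_mul hpow (by rw [hm_def]; linarith) hmpos.le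
            (pow_nonneg (by linarith [hx.1] : (0:ℝ) ≤ x) _)
      have h2 : lam * (x ^ (N - 1) * (-f (u x))) = -(lam * x ^ (N - 1) * f (u x)) := by
        ring
      linarith
  -- value at 1 is nonpositive (up to the linear part)
  have hg1 : (1:ℝ) ^ (N - 1) * φ (u' 1) ≤ 0 := by
    have h : φ (u' 1) ≤ 0 := by
      rw [hφ]
      exact mul_nonpos_of_nonneg_of_nonpos (hϕnn _)
        (hu'np 1 ⟨by norm_num, le_rfl⟩)
    simpa using h
  -- Step A conclusion
  have key : ∀ s ∈ Set.Ico (3/4 : ℝ) 1, lam * K * (1 - s) ≤ φ (-u' s) := by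
    intro s hs
    have h1 := hmonoh ⟨hs.1, hs.2.le⟩ (Set.right_mem_Icc.mpr (by norm_num)) hs.2.le
    simp only [mul_one] at h1
    have h2 : s ^ (N - 1) * φ (u' s) ≤ -(lam * K * (1 - s)) := by nlinarith [hg1]
    have hspow_pos : (0:ℝ) < s ^ (N - 1) := pow_pos (by linarith [hs.1]) _
    have hspow_le : s ^ (N - 1) ≤ 1 := pow_le_one₀ (by linarith [hs.1]) hs.2.le
    have hLKpos : 0 ≤ lam * K * (1 - s) :=
      mul_nonneg hLK (by linarith [hs.2.le])
    have hφneg : φ (u' s) ≤ 0 := by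
      by_contra hcon
      push_neg at hcon
      nlinarith [mul_pos hspow_pos hcon]
    have h3 : lam * K * (1 - s) ≤ s ^ (N - 1) * (-φ (u' s)) := by nlinarith
    have h4 : s ^ (N - 1) * (-φ (u' s)) ≤ -φ (u' s) := by nlinarith
    have h5 := h3.trans h4
    rwa [hφodd]
  -- Step B : pointwise lower bound on -u'
  have key2 : ∀ s ∈ Set.Ico (3/4 : ℝ) 1,
      (lam * K / c1) ^ (1 / (p - 1)) * (1 - s) ^ (1 / (p - 1)) ≤ -u' s := by
    intro s hs
    have hu's : 0 ≤ -u' s := neg_nonneg.mpr (hu'np s ⟨hs.1, hs.2.le⟩)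
    have hφle := (hgrow (-u' s) hu's).2
    have h1 : lam * K * (1 - s) ≤ c1 * (-u' s) ^ (p - 1) := (key s hs).trans hφle
    have h2 : lam * K * (1 - s) / c1 ≤ (-u' s) ^ (p - 1) :=
      (div_le_iff₀ hc1).mpr (by linarith [h1])
    have hbase : 0 ≤ lam * K * (1 - s) / c1 :=
      div_nonneg (mul_nonneg hLK (by linarith [hs.2.le])) hc1.le
    have h3 := Real.rpow_le_rpow hbase h2 (by positivity : (0:ℝ) ≤ 1 / (p - 1))
    have h4 : ((-u' s) ^ (p - 1)) ^ (1 / (p - 1)) = -u' s := by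
      rw [← Real.rpow_mul hu's, mul_one_div_cancel hp1ne, Real.rpow_one]
    rw [h4] at h3
    calc (lam * K / c1) ^ (1 / (p - 1)) * (1 - s) ^ (1 / (p - 1))
        = (lam * K / c1 * (1 - s)) ^ (1 / (p - 1)) := by
          rw [← Real.mul_rpow (div_nonneg hLK hc1.le)
            (by linarith [hs.2.le] : (0:ℝ) ≤ 1 - s)]
      _ = (lam * K * (1 - s) / c1) ^ (1 / (p - 1)) := by ring_nf
      _ ≤ -u' s := h3
  -- Step C : antitone comparison function
  obtain ⟨A, hA_def, hAnn⟩ :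
      ∃ A : ℝ, A = (lam * K / c1) ^ (1 / (p - 1)) ∧ 0 ≤ A :=
    ⟨_, rfl, Real.rpow_nonneg (div_nonneg hLK hc1.le) _⟩
  obtain ⟨B, hB_def⟩ : ∃ B : ℝ, B = A * ((p - 1) / p) := ⟨_, rfl⟩
  have hrpGen : ∀ x : ℝ, HasDerivAt (fun s : ℝ => (1 - s) ^ (p / (p - 1)))
      ((-1) * (p / (p - 1)) * (1 - x) ^ (p / (p - 1) - 1)) x := by
    intro x
    have hinner : HasDerivAt (fun s : ℝ => 1 - s) (-1) x := by
      simpa using (hasDerivAt_id x).const_sub 1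
    exact hinner.rpow_const (Or.inr hq1)
  have hucont : ContinuousOn u (Set.Icc (3/4 : ℝ) 1) := fun x hx =>
    ((hsol.hasDeriv x (hsubIcc hx)).continuousAt).continuousWithinAt
  have hGanti : AntitoneOn (fun s => u s - B * (1 - s) ^ (p / (p - 1)))
      (Set.Icc (3/4 : ℝ) 1) := by
    apply antitoneOn_of_deriv_nonpos (convex_Icc _ _)
    · apply hucont.sub
      apply ContinuousOn.mul continuousOn_const
      exact (continuousOn_const.sub continuousOn_id).rpow_const
        (fun x _ => Or.inr hqpos.le)
    · intro x hx
      rw [interior_Icc] at hx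
      exact ((hsol.hasDeriv x (hsubIcc ⟨hx.1.le, hx.2.le⟩)).sub
        ((hrpGen x).const_mul B)).differentiableAt.differentiableWithinAt
    · intro x hx
      rw [interior_Icc] at hx
      have hG : HasDerivAt (fun s => u s - B * (1 - s) ^ (p / (p - 1)))
          (u' x - B * ((-1) * (p / (p - 1)) * (1 - x) ^ (p / (p - 1) - 1))) x :=
        (hsol.hasDeriv x (hsubIcc ⟨hx.1.le, hx.2.le⟩)).sub ((hrpGen x).const_mul B)
      rw [hG.deriv]
      have hkey2 := key2 x ⟨hx.1.le, hx.2⟩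
      rw [← hA_def] at hkey2
      have hBq : B * (p / (p - 1)) = A := by
        rw [hB_def]; field_simp
      have heq : B * ((-1) * (p / (p - 1)) * (1 - x) ^ (p / (p - 1) - 1))
          = -(A * (1 - x) ^ (1 / (p - 1))) := by
        rw [hqm1, show B * ((-1) * (p / (p - 1)) * (1 - x) ^ (1 / (p - 1)))
          = -(B * (p / (p - 1)) * (1 - x) ^ (1 / (p - 1))) from by ring, hBq]
      rw [heq]
      linarith [hkey2]
  have hGr : u 1 - B * (1 - 1 : ℝ) ^ (p / (p - 1)) ≤ u r - B * (1 - r) ^ (p / (p - 1)) :=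
    hGanti ⟨hrL, hrU.le⟩ (Set.right_mem_Icc.mpr (by norm_num)) hrU.le
  rw [hsol.bd, sub_self, Real.zero_rpow (ne_of_gt hqpos), mul_zero] at hGr
  have hur : B * (1 - r) ^ (p / (p - 1)) ≤ u r := by linarith [hGr]
  -- identify the constant
  have hCB : (K / c1) ^ (1 / (p - 1)) * ((p - 1) / p) * lam ^ (1 / (p - 1)) = B := by
    rw [hB_def, hA_def, show lam * K / c1 = lam * (K / c1) from by ring,
      Real.mul_rpow hlam.le (div_nonneg hKpos.le hc1.le)]
    ring
  calc (K / c1) ^ (1 / (p - 1)) * ((p - 1) / p) * lam ^ (1 / (p - 1))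
        * (1 - r) ^ (p / (p - 1))
      = B * (1 - r) ^ (p / (p - 1)) := by rw [hCB]
    _ ≤ u r := hur
end

section
/- Let λ > 0 and let u be a positive solution of the radial problem such that u(r) > (u₀ + U₀)/2 for all r ∈ [0, 1/2], and let k > 0 satisfy f(t) ≥ k t^α for all t ≥ (u₀ + U₀)/2. Then u′(r) < 0 on (0,1/2] and r^{N−1} φ(u′(r)) ≤ −(λ k / N) r^{N} u(r)^{α} for all r ∈ (0, 1/2]. -/
open Set Filter MeasureTheory

theorem flux_estimate    (N : ℕ) (hN : 1 < N)
    (ϕ φ : ℝ → ℝ)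
    (hϕc : Continuous ϕ) (hϕnn : ∀ s, 0 ≤ ϕ s) (hϕeven : ∀ s, ϕ (-s) = ϕ s)
    (hϕdiff : ∀ s : ℝ, s ≠ 0 → DifferentiableAt ℝ ϕ s)
    (hϕmono : StrictMonoOn ϕ (Set.Ioi 0))
    (hφ : ∀ s, φ s = ϕ s * s)
    (p c1 c2 : ℝ) (hp : 1 < p) (hc1 : 0 < c1) (hc2 : 0 < c2)
    (hgrow : ∀ r : ℝ, 0 ≤ r → c2 * r ^ (p - 1) ≤ φ r ∧ φ r ≤ c1 * r ^ (p - 1))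
    (f : ℝ → ℝ) (hfc : ContinuousOn f (Set.Ici 0)) (hfm : MonotoneOn f (Set.Ici 0))
    (hf0 : f 0 < 0) (u0 : ℝ) (hu0 : 0 < u0) (hfu0 : f u0 = 0)
    (hzero : ∀ s : ℝ, 0 ≤ s → f s = 0 → s = u0)
    (F : ℝ → ℝ) (hF : ∀ t, F t = ∫ s in (0:ℝ)..t, f s)
    (U0 : ℝ) (hU0 : 0 < U0) (hFU0 : F U0 = 0)
    (hU0uniq : ∀ s : ℝ, 0 < s → F s = 0 → s = U0)
    (hu0U0 : u0 < U0)
    (α : ℝ) (hα : p - 1 < α)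
    (lam : ℝ) (hlam : 0 < lam) (u u' : ℝ → ℝ) (hu : IsPosSol N φ f lam u u')
    (hbig : ∀ r ∈ Set.Icc (0:ℝ) (1/2), (u0 + U0) / 2 < u r)
    (k : ℝ) (hk : 0 < k) (hkf : ∀ t : ℝ, (u0 + U0) / 2 ≤ t → k * t ^ α ≤ f t) :
    (∀ r ∈ Set.Ioc (0:ℝ) (1/2), u' r < 0) ∧
    (∀ r ∈ Set.Ioc (0:ℝ) (1/2),
      r ^ (N - 1) * φ (u' r) ≤ -(lam * k / N) * r ^ N * u r ^ α) := by

  obtain ⟨hd, hc, hpos, _, heqn, hd0, hbd⟩ := hu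
  have hφcont : Continuous φ := by
    have hφe : φ = fun s => ϕ s * s := funext hφ
    rw [hφe]; exact hϕc.mul continuous_id
  have hNm : N - 1 ≠ 0 := by omega
  have hGcont : ContinuousOn (fun s => s ^ (N-1) * φ (u' s)) (Set.Icc (0:ℝ) (1/2)) := by
    apply ContinuousOn.mul (continuous_pow _).continuousOn
    exact hφcont.comp_continuousOn (hc.mono (fun x hx => ⟨hx.1, by linarith [hx.2]⟩))
  have hG0 : (0:ℝ) ^ (N-1) * φ (u' 0) = 0 := by
    rw [zero_pow hNm]; ring
  have hα0 : (0:ℝ) ≤ α := by linarith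
  have hupos : ∀ s ∈ Set.Icc (0:ℝ) (1/2), 0 < u s := by
    intro s hs
    have := hbig s hs
    linarith
  have hfpos : ∀ s ∈ Set.Icc (0:ℝ) (1/2), 0 < f (u s) := by
    intro s hs
    have h1 := hkf (u s) (hbig s hs).le
    have h2 : 0 < u s ^ α := Real.rpow_pos_of_pos (hupos s hs) α
    nlinarith
  have hGanti : StrictAntiOn (fun s => s ^ (N-1) * φ (u' s)) (Set.Icc (0:ℝ) (1/2)) := by
    apply strictAntiOn_of_deriv_neg (convex_Icc _ _) hGcont
    intro x hx
    rw [interior_Icc] at hx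
    have hx1 : x ∈ Set.Ioo (0:ℝ) 1 := ⟨hx.1, by linarith [hx.2]⟩
    rw [(heqn x hx1).deriv]
    have h1 : 0 < f (u x) := hfpos x ⟨hx.1.le, hx.2.le⟩
    have h2 : 0 < x ^ (N-1) := pow_pos hx.1 _
    nlinarith [mul_pos (mul_pos hlam h2) h1]
  have hu'neg : ∀ r ∈ Set.Ioc (0:ℝ) (1/2), u' r < 0 := by
    intro r hr
    have hGr : r ^ (N-1) * φ (u' r) < 0 := by
      have := hGanti (Set.left_mem_Icc.2 (by norm_num)) ⟨hr.1.le, hr.2⟩ hr.1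
      simpa [hG0] using this
    by_contra h
    push_neg at h
    have h1 : 0 ≤ φ (u' r) := by rw [hφ]; exact mul_nonneg (hϕnn _) h
    have h2 : 0 ≤ r ^ (N-1) := pow_nonneg hr.1.le _
    nlinarith
  have huanti : AntitoneOn u (Set.Icc (0:ℝ) (1/2)) := by
    apply antitoneOn_of_deriv_nonpos (convex_Icc _ _)
    · exact fun x hx => (hd x ⟨hx.1, by linarith [hx.2]⟩).continuousAt.continuousWithinAt
    · intro x hx
      rw [interior_Icc] at hx
      exact (hd x ⟨hx.1.le, by linarith [hx.2]⟩).differentiableAt.differentiableWithinAt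
    · intro x hx
      rw [interior_Icc] at hx
      rw [(hd x ⟨hx.1.le, by linarith [hx.2]⟩).deriv]
      exact (hu'neg x ⟨hx.1, hx.2.le⟩).le
  refine ⟨hu'neg, ?_⟩
  intro r hr
  have hur : 0 < u r := hupos r ⟨hr.1.le, hr.2⟩
  have hNpos : (0:ℝ) < N := by exact_mod_cast Nat.zero_lt_of_lt hN
  set C : ℝ := lam * k / N * u r ^ α with hC
  have hCpos : 0 < C := by
    have := Real.rpow_pos_of_pos hur α
    positivity
  have hderH : ∀ x ∈ Set.Ioo (0:ℝ) r, HasDerivAt (fun s => s ^ (N-1) * φ (u' s) + C * s ^ N)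
      (-(lam * x ^ (N-1) * f (u x)) + C * ((N:ℝ) * x ^ (N-1))) x := by
    intro x hx
    have hx1 : x ∈ Set.Ioo (0:ℝ) 1 := ⟨hx.1, by linarith [lt_of_lt_of_le hx.2 hr.2]⟩
    exact (heqn x hx1).add ((hasDerivAt_pow N x).const_mul C)
  have hHanti : AntitoneOn (fun s => s ^ (N-1) * φ (u' s) + C * s ^ N) (Set.Icc 0 r) := by
    apply antitoneOn_of_deriv_nonpos (convex_Icc _ _)
    · exact ((hGcont.mono (Set.Icc_subset_Icc le_rfl hr.2)).add (by fun_prop))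
    · intro x hx
      rw [interior_Icc] at hx
      exact (hderH x hx).differentiableAt.differentiableWithinAt
    · intro x hx
      rw [interior_Icc] at hx
      have hx12 : x < 1/2 := lt_of_lt_of_le hx.2 hr.2
      rw [(hderH x hx).deriv]
      have hux : u r ≤ u x :=
        huanti ⟨hx.1.le, hx12.le⟩ ⟨hr.1.le, hr.2⟩ hx.2.le
      have hrpow : u r ^ α ≤ u x ^ α := Real.rpow_le_rpow hur.le hux hα0
      have hle : k * u r ^ α ≤ f (u x) :=
        le_trans (by nlinarith) (hkf (u x) (hbig x ⟨hx.1.le, hx12.le⟩).le)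
      have hCN : C * (N:ℝ) = lam * k * u r ^ α := by
        rw [hC]; field_simp
      have hxp : 0 < x ^ (N-1) := pow_pos hx.1 _
      nlinarith [mul_le_mul_of_nonneg_left hle (mul_nonneg hlam.le hxp.le)]
  have hfin := hHanti (Set.left_mem_Icc.2 hr.1.le) (Set.right_mem_Icc.2 hr.1.le) hr.1.le
  have hN0 : N ≠ 0 := by omega
  simp only [zero_pow hNm, zero_pow hN0, zero_mul, mul_zero, add_zero] at hfin
  have : r ^ (N-1) * φ (u' r) + C * r ^ N ≤ 0 := by linarith
  have hCeq : -(lam * k / N) * r ^ N * u r ^ α = -(C * r ^ N) := by rw [hC]; ring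
  linarith [hCeq ▸ (by linarith : r ^ (N-1) * φ (u' r) ≤ -(C * r ^ N))]
end
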